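/- arXiv:1302.1435 — 2 statements merged into one kernel-verified Lean document; each statement's English description precedes it below -/
import Mathlib

section
/- For an invertible d×d real matrix A with singular values α_1(A) ≥ ... ≥ α_d(A) > 0, and for 0 ≤ s < d with integer part k, the singular value function φ^s(A) = α_1(A)···α_k(A)·α_{k+1}(A)^{s-k} is submultiplicative: φ^s(AB) ≤ φ^s(A)·φ^s(B) for all invertible d×d matrices A, B. -/
open scoped BigOperators

/-- The `l`-th (0-indexed, in decreasing order) singular value of a real `d × d` matrix,
i.e. the square roots of the eigenvalues of `Aᵀ * A`, listed in decreasing order. -/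
noncomputable def sval {d : ℕ} (A : Matrix (Fin d) (Fin d) ℝ) (l : ℕ) : ℝ :=
  (((Finset.univ.val.map (fun i : Fin d =>
      Real.sqrt ((Matrix.isHermitian_conjTranspose_mul_self A).eigenvalues i))).sort
      (· ≤ ·)).reverse).getD l 0

open Polynomial Matrix

namespace PhiAux

variable {d : ℕ}

/-- the multiset of singular values -/
noncomputable def svmul {d : ℕ} (A : Matrix (Fin d) (Fin d) ℝ) : Multiset ℝ :=
  Finset.univ.val.map (fun i : Fin d =>
      Real.sqrt ((Matrix.isHermitian_conjTranspose_mul_self A).eigenvalues i))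

/-- the descending list of singular values -/
noncomputable def dlist {d : ℕ} (A : Matrix (Fin d) (Fin d) ℝ) : List ℝ :=
  ((svmul A).sort (· ≤ ·)).reverse

lemma sval_def (A : Matrix (Fin d) (Fin d) ℝ) (l : ℕ) :
    sval A l = (dlist A).getD l 0 := rfl

lemma dlist_coe (A : Matrix (Fin d) (Fin d) ℝ) : ((dlist A : List ℝ) : Multiset ℝ) = svmul A := by
  rw [dlist, Multiset.coe_reverse, Multiset.sort_eq]

lemma dlist_length (A : Matrix (Fin d) (Fin d) ℝ) : (dlist A).length = d := by
  have := congrArg Multiset.card (dlist_coe A)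
  simpa [svmul] using this

lemma dlist_sorted (A : Matrix (Fin d) (Fin d) ℝ) : (dlist A).Pairwise (· ≥ ·) := by
  rw [dlist]
  rw [List.pairwise_reverse]
  exact Multiset.pairwise_sort _ (· ≤ ·)

lemma ofFn_sval (A : Matrix (Fin d) (Fin d) ℝ) :
    List.ofFn (fun i : Fin d => sval A i) = dlist A := by
  have h := dlist_length A
  apply List.ext_getElem (by simp [h])
  intro n h1 h2
  simp only [List.getElem_ofFn]
  rw [sval_def, List.getD_eq_getElem _ _ (by omega)]

lemma svmul_eq_map_sval (A : Matrix (Fin d) (Fin d) ℝ) :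
    Finset.univ.val.map (fun i : Fin d => sval A (i : ℕ)) = svmul A := by
  rw [← dlist_coe, ← ofFn_sval]
  rw [List.ofFn_eq_map]
  simp [Fin.univ_def, Finset.range, Multiset.range]

lemma sval_mem (A : Matrix (Fin d) (Fin d) ℝ) {l : ℕ} (hl : l < d) :
    sval A l ∈ svmul A := by
  rw [← svmul_eq_map_sval]
  have : sval A l = sval A ((⟨l, hl⟩ : Fin d) : ℕ) := rfl
  rw [this]
  exact Multiset.mem_map_of_mem _ (Finset.mem_univ_val _)

lemma sval_eq_zero_of_le (A : Matrix (Fin d) (Fin d) ℝ) {l : ℕ} (hl : d ≤ l) :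
    sval A l = 0 := by
  rw [sval_def, List.getD_eq_default]
  rw [dlist_length]; exact hl

lemma svmul_nonneg (A : Matrix (Fin d) (Fin d) ℝ) {x : ℝ} (hx : x ∈ svmul A) : 0 ≤ x := by
  rw [svmul] at hx
  obtain ⟨i, _, rfl⟩ := Multiset.mem_map.mp hx
  exact Real.sqrt_nonneg _

lemma sval_nonneg (A : Matrix (Fin d) (Fin d) ℝ) (l : ℕ) : 0 ≤ sval A l := by
  rcases lt_or_ge l d with h | h
  · exact svmul_nonneg A (sval_mem A h)
  · rw [sval_eq_zero_of_le A h]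

lemma sval_anti (A : Matrix (Fin d) (Fin d) ℝ) {l m : ℕ} (h : l ≤ m) :
    sval A m ≤ sval A l := by
  rcases lt_or_ge m d with hm | hm
  · have hl : l < d := lt_of_le_of_lt h hm
    rw [sval_def, sval_def,
      List.getD_eq_getElem _ _ (by rw [dlist_length]; exact hm),
      List.getD_eq_getElem _ _ (by rw [dlist_length]; exact hl)]
    rcases eq_or_lt_of_le h with rfl | hlt
    · exact le_refl _
    · exact (dlist_sorted A).rel_get_of_lt (a := ⟨l, by rw [dlist_length]; exact hl⟩)
        (b := ⟨m, by rw [dlist_length]; exact hm⟩) hlt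
  · rw [sval_eq_zero_of_le A hm]
    exact sval_nonneg A l

lemma le_sval_zero (A : Matrix (Fin d) (Fin d) ℝ) {x : ℝ} (hx : x ∈ svmul A) :
    x ≤ sval A 0 := by
  rw [← dlist_coe] at hx
  rw [Multiset.mem_coe] at hx
  obtain ⟨n, hn, rfl⟩ := List.mem_iff_getElem.mp hx
  rw [sval_def, List.getD_eq_getElem _ _ (by omega)]
  rcases Nat.eq_zero_or_pos n with rfl | hpos
  · exact le_refl _
  · exact (dlist_sorted A).rel_get_of_lt (a := ⟨0, by omega⟩) (b := ⟨n, hn⟩) hpos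




variable {d : ℕ}

lemma multiset_map_univ_eq_coe_ofFn {α : Type*} {n : ℕ} (f : Fin n → α) :
    (Finset.univ.val.map f : Multiset α) = (List.ofFn f : Multiset α) := by
  rw [List.ofFn_eq_map]
  simp [Fin.univ_def, Finset.range, Multiset.range]

/-- existence of a permutation matching two tuples with equal multisets -/
lemma exists_perm_of_multiset_eq {n : ℕ} {f g : Fin n → ℝ}
    (h : (Finset.univ.val.map f : Multiset ℝ) = Finset.univ.val.map g) :
    ∃ σ : Equiv.Perm (Fin n), f = g ∘ σ := by
  have key : ∀ (u : Fin n → ℝ) (σ : Equiv.Perm (Fin n)),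
      (Finset.univ.val.map (u ∘ σ) : Multiset ℝ) = Finset.univ.val.map u := by
    intro u σ
    have : (Finset.univ.val.map (⇑σ) : Multiset (Fin n)) = Finset.univ.val := by
      have := congrArg Finset.val (Finset.map_univ_equiv σ)
      simpa [Finset.map] using this
    calc (Finset.univ.val.map (u ∘ σ) : Multiset ℝ)
        = (Finset.univ.val.map (⇑σ)).map u := by rw [Multiset.map_map]
      _ = Finset.univ.val.map u := by rw [this]
  set σf := Tuple.sort f
  set σg := Tuple.sort g
  have hsf : List.Pairwise (· ≤ ·) (List.ofFn (f ∘ σf)) := by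
    rw [List.pairwise_ofFn]
    intro a b hab
    exact Tuple.monotone_sort f (le_of_lt hab)
  have hsg : List.Pairwise (· ≤ ·) (List.ofFn (g ∘ σg)) := by
    rw [List.pairwise_ofFn]
    intro a b hab
    exact Tuple.monotone_sort g (le_of_lt hab)
  have hperm : List.Perm (List.ofFn (f ∘ σf)) (List.ofFn (g ∘ σg)) := by
    rw [← Multiset.coe_eq_coe, ← multiset_map_univ_eq_coe_ofFn, ← multiset_map_univ_eq_coe_ofFn,
      key f σf, key g σg, h]
  have heq : List.ofFn (f ∘ σf) = List.ofFn (g ∘ σg) :=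
    List.Perm.eq_of_pairwise' hsf hsg hperm
  have heq2 : f ∘ σf = g ∘ σg := List.ofFn_inj.mp heq
  refine ⟨σf.symm.trans σg, ?_⟩
  funext i
  have := congrFun heq2 (σf.symm i)
  simpa using this

/-- charpoly is invariant under conjugation -/
lemma charpoly_conj {n : Type*} [Fintype n] [DecidableEq n]
    {U V M : Matrix n n ℝ} (hUV : U * V = 1) (hVU : V * U = 1) :
    (U * M * V).charpoly = M.charpoly := by
  have hmap : ∀ P Q : Matrix n n ℝ, (P * Q).map (C : ℝ →+* ℝ[X]) = P.map C * Q.map C := by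
    intro P Q
    exact Matrix.map_mul
  have hcm : (U * M * V).charmatrix = U.map C * M.charmatrix * V.map C := by
    rw [Matrix.charmatrix]
    rw [Matrix.charmatrix]
    rw [Matrix.mul_sub, Matrix.sub_mul]
    congr 1
    · -- scalar X = U.map C * scalar X * V.map C
      have hcomm : (Matrix.scalar n) (X : ℝ[X]) * V.map C = V.map C * (Matrix.scalar n) X :=
        (Matrix.scalar_commute (X : ℝ[X]) (fun r => Commute.all _ _) (V.map C)).eq
      rw [Matrix.mul_assoc, hcomm, ← Matrix.mul_assoc, ← hmap, hUV]
      rw [Matrix.map_one C (map_zero C) (map_one C), Matrix.one_mul]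
    · rw [RingHom.mapMatrix_apply, RingHom.mapMatrix_apply, ← hmap, ← hmap]
  rw [Matrix.charpoly, Matrix.charpoly, hcm, Matrix.det_mul, Matrix.det_mul]
  have h1 : U.map C * V.map C = 1 := by rw [← hmap, hUV, Matrix.map_one C (map_zero C) (map_one C)]
  have hdet : (U.map C).det * (V.map C).det = 1 := by rw [← Matrix.det_mul, h1, Matrix.det_one]
  calc (U.map ⇑C).det * M.charmatrix.det * (V.map ⇑C).det
      = ((U.map ⇑C).det * (V.map ⇑C).det) * M.charmatrix.det := by ring
    _ = M.charmatrix.det := by rw [hdet, one_mul]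




variable {n : Type*} [Fintype n] [DecidableEq n]

lemma charpoly_diagonal (v : n → ℝ) :
    (Matrix.diagonal v).charpoly = ∏ i : n, (X - C (v i)) := by
  have h : (Matrix.diagonal v).charmatrix = Matrix.diagonal (fun i => (X : ℝ[X]) - C (v i)) := by
    ext i j
    by_cases hij : i = j
    · subst hij
      rw [Matrix.charmatrix_apply_eq, Matrix.diagonal_apply_eq, Matrix.diagonal_apply_eq]
    · rw [Matrix.charmatrix_apply_ne _ _ _ hij, Matrix.diagonal_apply_ne _ hij,
        Matrix.diagonal_apply_ne _ hij, map_zero, neg_zero]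
  rw [Matrix.charpoly, h, Matrix.det_diagonal]

/-- the charpoly of a real Hermitian matrix is the product of (X - eigenvalue) -/
lemma charpoly_isHermitian {M : Matrix n n ℝ} (hM : M.IsHermitian) :
    M.charpoly = ∏ i : n, (X - C (hM.eigenvalues i)) := by
  have hU : ((hM.eigenvectorUnitary : Matrix n n ℝ)) * star (hM.eigenvectorUnitary : Matrix n n ℝ)
      = 1 := (Matrix.mem_unitaryGroup_iff).mp hM.eigenvectorUnitary.2
  have hU' : star ((hM.eigenvectorUnitary : Matrix n n ℝ))
      * (hM.eigenvectorUnitary : Matrix n n ℝ) = 1 :=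
    (Matrix.mem_unitaryGroup_iff').mp hM.eigenvectorUnitary.2
  have hspec := hM.spectral_theorem
  have : M.charpoly = (Matrix.diagonal (RCLike.ofReal ∘ hM.eigenvalues)).charpoly := by
    conv_lhs => rw [hspec]
    exact charpoly_conj hU hU'
  rw [this]
  have hdg : (RCLike.ofReal ∘ hM.eigenvalues : n → ℝ) = hM.eigenvalues := by
    funext i; simp
  rw [hdg, charpoly_diagonal]

lemma roots_charpoly_isHermitian {M : Matrix n n ℝ} (hM : M.IsHermitian) :
    M.charpoly.roots = Finset.univ.val.map hM.eigenvalues := by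
  rw [charpoly_isHermitian hM]
  have : (∏ i : n, (X - C (hM.eigenvalues i))) =
      ((Finset.univ.val.map hM.eigenvalues).map (fun a => X - C a)).prod := by
    rw [Multiset.map_map]
    rfl
  rw [this, Polynomial.roots_multiset_prod_X_sub_C]


section P45

variable {d : ℕ}

lemma svmul_eq_roots (A : Matrix (Fin d) (Fin d) ℝ) :
    svmul A = ((Aᴴ * A).charpoly.roots).map Real.sqrt := by
  rw [roots_charpoly_isHermitian (Matrix.isHermitian_conjTranspose_mul_self A), svmul,
    Multiset.map_map]
  rfl

lemma sval_eq_of_charpoly {A B : Matrix (Fin d) (Fin d) ℝ}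
    (h : (Aᴴ * A).charpoly = (Bᴴ * B).charpoly) : sval A = sval B := by
  have hsv : svmul A = svmul B := by rw [svmul_eq_roots, svmul_eq_roots, h]
  funext l
  rw [sval_def, sval_def, dlist, dlist, hsv]

lemma eig_nonneg (A : Matrix (Fin d) (Fin d) ℝ) (i : Fin d) :
    0 ≤ (Matrix.isHermitian_conjTranspose_mul_self A).eigenvalues i := by
  exact (Matrix.posSemidef_conjTranspose_mul_self A).eigenvalues_nonneg i

lemma eig_pos {A : Matrix (Fin d) (Fin d) ℝ} (hA : IsUnit A.det) (i : Fin d) :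
    0 < (Matrix.isHermitian_conjTranspose_mul_self A).eigenvalues i := by
  have hdet : (Aᴴ * A).det = A.det * A.det := by
    rw [Matrix.det_mul, Matrix.det_conjTranspose, star_trivial]
  have hne : (Aᴴ * A).det ≠ 0 := by
    rw [hdet]
    exact mul_ne_zero hA.ne_zero hA.ne_zero
  have hprod := (Matrix.isHermitian_conjTranspose_mul_self A).det_eq_prod_eigenvalues
  rw [hprod] at hne
  have : ∀ j : Fin d, (Matrix.isHermitian_conjTranspose_mul_self A).eigenvalues j ≠ 0 := by
    intro j hj
    apply hne
    apply Finset.prod_eq_zero (Finset.mem_univ j)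
    simpa using hj
  exact lt_of_le_of_ne (eig_nonneg A i) (Ne.symm (this i))

lemma sval_pos {A : Matrix (Fin d) (Fin d) ℝ} (hA : IsUnit A.det) {l : ℕ} (hl : l < d) :
    0 < sval A l := by
  have hmem := sval_mem A hl
  rw [svmul] at hmem
  obtain ⟨i, _, hi⟩ := Multiset.mem_map.mp hmem
  rw [← hi]
  exact Real.sqrt_pos.mpr (eig_pos hA i)

lemma sval_orth_left {Q M : Matrix (Fin d) (Fin d) ℝ} (hQ : Qᵀ * Q = 1) :
    sval (Q * M) = sval M := by
  have hQ' : Qᴴ * Q = 1 := by rwa [Matrix.conjTranspose_eq_transpose_of_trivial]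
  apply sval_eq_of_charpoly
  rw [Matrix.conjTranspose_mul]
  have : Mᴴ * Qᴴ * (Q * M) = Mᴴ * (Qᴴ * Q) * M := by
    rw [Matrix.mul_assoc, Matrix.mul_assoc, Matrix.mul_assoc]
  rw [this, hQ', Matrix.mul_one]

lemma sval_orth_right {M Q : Matrix (Fin d) (Fin d) ℝ} (hQ : Qᵀ * Q = 1) (hQ' : Q * Qᵀ = 1) :
    sval (M * Q) = sval M := by
  have h1 : Qᴴ * Q = 1 := by rwa [Matrix.conjTranspose_eq_transpose_of_trivial]
  have h2 : Q * Qᴴ = 1 := by rwa [Matrix.conjTranspose_eq_transpose_of_trivial]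
  apply sval_eq_of_charpoly
  rw [Matrix.conjTranspose_mul]
  have : Qᴴ * Mᴴ * (M * Q) = Qᴴ * (Mᴴ * M) * Q := by
    rw [Matrix.mul_assoc, Matrix.mul_assoc, Matrix.mul_assoc]
  rw [this]
  exact charpoly_conj h1 h2

/-- key dot-product equality -/
lemma dot_mulVec_eq (M : Matrix (Fin d) (Fin d) ℝ) (x : Fin d → ℝ) :
    (M *ᵥ x) ⬝ᵥ (M *ᵥ x) = x ⬝ᵥ ((Mᴴ * M) *ᵥ x) := by
  rw [Matrix.conjTranspose_eq_transpose_of_trivial]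
  rw [← Matrix.mulVec_mulVec, Matrix.dotProduct_mulVec, ← Matrix.mulVec_transpose]
  exact dotProduct_comm _ _

lemma dot_mulVec_le (M : Matrix (Fin d) (Fin d) ℝ) (x : Fin d → ℝ) :
    (M *ᵥ x) ⬝ᵥ (M *ᵥ x) ≤ (sval M 0)^2 * (x ⬝ᵥ x) := by
  classical
  set hH := Matrix.isHermitian_conjTranspose_mul_self M with hdef
  set U : Matrix (Fin d) (Fin d) ℝ := (hH.eigenvectorUnitary : Matrix (Fin d) (Fin d) ℝ) with hU
  have hUU : U * star U = 1 := (Matrix.mem_unitaryGroup_iff).mp hH.eigenvectorUnitary.2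
  have hUU' : star U * U = 1 := (Matrix.mem_unitaryGroup_iff').mp hH.eigenvectorUnitary.2
  have hstar : star U = Uᵀ := by
    rw [Matrix.star_eq_conjTranspose, Matrix.conjTranspose_eq_transpose_of_trivial]
  rw [hstar] at hUU hUU'
  have hspec : Mᴴ * M = U * Matrix.diagonal hH.eigenvalues * Uᵀ := by
    have h := hH.spectral_theorem
    have hdg : (RCLike.ofReal ∘ hH.eigenvalues : Fin d → ℝ) = hH.eigenvalues := by
      funext i; simp
    rw [hdg] at h
    rw [← hstar]
    exact h
  set z := Uᵀ *ᵥ x with hz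
  have hxz : ∀ w, x ⬝ᵥ (U *ᵥ w) = z ⬝ᵥ w := by
    intro w
    rw [Matrix.dotProduct_mulVec, hz, Matrix.mulVec_transpose]
  have h1 : x ⬝ᵥ ((Mᴴ * M) *ᵥ x) = z ⬝ᵥ (Matrix.diagonal hH.eigenvalues *ᵥ z) := by
    have hmv : (Mᴴ * M) *ᵥ x = U *ᵥ (Matrix.diagonal hH.eigenvalues *ᵥ (Uᵀ *ᵥ x)) := by
      rw [Matrix.mulVec_mulVec, Matrix.mulVec_mulVec, ← hspec]
    rw [hmv, hxz, ← hz]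
  have hzz : z ⬝ᵥ z = x ⬝ᵥ x := by
    rw [hz]
    calc (Uᵀ *ᵥ x) ⬝ᵥ (Uᵀ *ᵥ x) = x ⬝ᵥ ((Uᵀᵀ * Uᵀ) *ᵥ x) := dot_mulVec_eq Uᵀ x
      _ = x ⬝ᵥ x := by rw [Matrix.transpose_transpose, hUU, Matrix.one_mulVec]
  have heig : ∀ i : Fin d, hH.eigenvalues i ≤ (sval M 0)^2 := by
    intro i
    have hmem : Real.sqrt (hH.eigenvalues i) ∈ svmul M := by
      rw [svmul]
      exact Multiset.mem_map_of_mem _ (Finset.mem_univ_val _)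
    have hle := le_sval_zero M hmem
    have h0 : (0:ℝ) ≤ Real.sqrt (hH.eigenvalues i) := Real.sqrt_nonneg _
    nlinarith [Real.sq_sqrt (eig_nonneg M i)]
  rw [dot_mulVec_eq, h1, ← hzz]
  rw [dotProduct, dotProduct, Finset.mul_sum]
  apply Finset.sum_le_sum
  intro i _
  rw [Matrix.mulVec_diagonal]
  have := heig i
  nlinarith [sq_nonneg (z i), sval_nonneg M 0]

lemma exists_unit_vec (M : Matrix (Fin d) (Fin d) ℝ) (hd : 0 < d) :
    ∃ x : Fin d → ℝ, x ⬝ᵥ x = 1 ∧ (M *ᵥ x) ⬝ᵥ (M *ᵥ x) = (sval M 0)^2 := by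
  classical
  set hH := Matrix.isHermitian_conjTranspose_mul_self M with hdef
  have hmem := sval_mem M hd
  rw [svmul] at hmem
  obtain ⟨j, _, hj⟩ := Multiset.mem_map.mp hmem
  set x : Fin d → ℝ := ⇑(hH.eigenvectorBasis j) with hx
  have hMx : (Mᴴ * M) *ᵥ x = hH.eigenvalues j • x := hH.mulVec_eigenvectorBasis j
  have hxx : x ⬝ᵥ x = 1 := by
    have horth := hH.eigenvectorBasis.orthonormal.1 j
    have : (inner ℝ (hH.eigenvectorBasis j) (hH.eigenvectorBasis j) : ℝ) = 1 := by
      rw [real_inner_self_eq_norm_sq, horth]; norm_num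
    rw [EuclideanSpace.inner_eq_star_dotProduct] at this
    simpa [dotProduct, WithLp.equiv, hx] using this
  refine ⟨x, hxx, ?_⟩
  rw [dot_mulVec_eq, hMx, dotProduct_smul, smul_eq_mul, hxx, mul_one, ← hj]
  rw [Real.sq_sqrt (eig_nonneg M j)]

lemma sval0_submul (M N : Matrix (Fin d) (Fin d) ℝ) :
    sval (M * N) 0 ≤ sval M 0 * sval N 0 := by
  rcases Nat.eq_zero_or_pos d with rfl | hd
  · rw [sval_eq_zero_of_le _ (le_refl 0)]
    exact mul_nonneg (sval_nonneg M 0) (sval_nonneg N 0)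
  · obtain ⟨x, hxx, hx⟩ := exists_unit_vec (M * N) hd
    have h1 : ((M * N) *ᵥ x) ⬝ᵥ ((M * N) *ᵥ x) = (M *ᵥ (N *ᵥ x)) ⬝ᵥ (M *ᵥ (N *ᵥ x)) := by
      rw [Matrix.mulVec_mulVec]
    have h2 := dot_mulVec_le M (N *ᵥ x)
    have h3 := dot_mulVec_le N x
    have h4 : (sval (M * N) 0)^2 ≤ (sval M 0 * sval N 0)^2 := by
      rw [← hx, h1]
      calc (M *ᵥ (N *ᵥ x)) ⬝ᵥ (M *ᵥ (N *ᵥ x)) ≤ (sval M 0)^2 * ((N *ᵥ x) ⬝ᵥ (N *ᵥ x)) := h2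
        _ ≤ (sval M 0)^2 * ((sval N 0)^2 * (x ⬝ᵥ x)) := by
            exact mul_le_mul_of_nonneg_left h3 (sq_nonneg _)
        _ = (sval M 0 * sval N 0)^2 := by rw [hxx]; ring
    nlinarith [sval_nonneg (M * N) 0, mul_nonneg (sval_nonneg M 0) (sval_nonneg N 0)]

end P45
section P6

variable {d : ℕ}

lemma exists_perm_sval (A : Matrix (Fin d) (Fin d) ℝ) :
    ∃ τ : Equiv.Perm (Fin d), ∀ i : Fin d,
      Real.sqrt ((Matrix.isHermitian_conjTranspose_mul_self A).eigenvalues i) = sval A (τ i) := by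
  have h := (svmul_eq_map_sval A).symm
  rw [svmul] at h
  obtain ⟨σ, hσ⟩ := exists_perm_of_multiset_eq h
  exact ⟨σ, fun i => congrFun hσ i⟩

lemma svd {A : Matrix (Fin d) (Fin d) ℝ} (hA : IsUnit A.det) :
    ∃ Q₁ Q₂ : Matrix (Fin d) (Fin d) ℝ,
      Q₁ᵀ * Q₁ = 1 ∧ Q₁ * Q₁ᵀ = 1 ∧ Q₂ᵀ * Q₂ = 1 ∧ Q₂ * Q₂ᵀ = 1 ∧
      A = Q₁ * Matrix.diagonal (fun i : Fin d => sval A (i : ℕ)) * Q₂ := by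
  classical
  set hH := Matrix.isHermitian_conjTranspose_mul_self A with hHdef
  set U : Matrix (Fin d) (Fin d) ℝ := (hH.eigenvectorUnitary : Matrix (Fin d) (Fin d) ℝ) with hUdef
  have hstar : star U = Uᵀ := by
    rw [Matrix.star_eq_conjTranspose, Matrix.conjTranspose_eq_transpose_of_trivial]
  have hUU : U * Uᵀ = 1 := by
    have h2 := (Matrix.mem_unitaryGroup_iff).mp hH.eigenvectorUnitary.2
    rwa [hstar] at h2
  have hUU' : Uᵀ * U = 1 := by
    have h2 := (Matrix.mem_unitaryGroup_iff').mp hH.eigenvectorUnitary.2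
    rwa [hstar] at h2
  have hspec : Aᴴ * A = U * Matrix.diagonal hH.eigenvalues * Uᵀ := by
    have h := hH.spectral_theorem
    have hdg : (RCLike.ofReal ∘ hH.eigenvalues : Fin d → ℝ) = hH.eigenvalues := by
      funext i; simp
    rw [hdg] at h
    rw [← hstar]
    exact h
  obtain ⟨τ, hτ⟩ := exists_perm_sval A
  set ν : Fin d → ℝ := fun i : Fin d => sval A (i : ℕ) with hν
  have heig : ∀ i : Fin d, hH.eigenvalues i = ν (τ i) ^ 2 := by
    intro i
    rw [hν]
    simp only
    rw [← hτ i, Real.sq_sqrt (eig_nonneg A i)]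
  set Q : Matrix (Fin d) (Fin d) ℝ := Matrix.of (fun a j => U a (τ.symm j)) with hQdef
  have hQ1 : Qᵀ * Q = 1 := by
    ext j k
    have h2 : (Qᵀ * Q) j k = (Uᵀ * U) (τ.symm j) (τ.symm k) := by
      rw [Matrix.mul_apply, Matrix.mul_apply]
      apply Finset.sum_congr rfl
      intro a _
      simp [hQdef]
    rw [h2, hUU']
    by_cases hjk : j = k
    · subst hjk; simp
    · rw [Matrix.one_apply_ne (fun hc => hjk (τ.symm.injective hc)), Matrix.one_apply_ne hjk]
  have hQ2 : Q * Qᵀ = 1 := by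
    ext a b
    have h2 : (Q * Qᵀ) a b = (U * Uᵀ) a b := by
      rw [Matrix.mul_apply, Matrix.mul_apply]
      simp only [hQdef, Matrix.transpose_apply, Matrix.of_apply]
      exact Equiv.sum_comp τ.symm (fun i => U a i * U b i)
    rw [h2, hUU]
  set D : Matrix (Fin d) (Fin d) ℝ := Matrix.diagonal ν with hDdef
  set Dinv : Matrix (Fin d) (Fin d) ℝ := Matrix.diagonal (fun i => (ν i)⁻¹) with hDinvdef
  have hν0 : ∀ i, ν i ≠ 0 := fun i => (sval_pos hA i.isLt).ne'
  have hDD : D * Dinv = 1 := by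
    rw [hDdef, hDinvdef, Matrix.diagonal_mul_diagonal, ← Matrix.diagonal_one]
    have h9 : (fun i => ν i * (ν i)⁻¹) = fun _ : Fin d => (1:ℝ) := by
      funext i; exact mul_inv_cancel₀ (hν0 i)
    rw [h9]
  have hDD' : Dinv * D = 1 := by
    rw [hDdef, hDinvdef, Matrix.diagonal_mul_diagonal, ← Matrix.diagonal_one]
    have h9 : (fun i => (ν i)⁻¹ * ν i) = fun _ : Fin d => (1:ℝ) := by
      funext i; exact inv_mul_cancel₀ (hν0 i)
    rw [h9]
  have hQspec : Aᵀ * A = Q * (D * (D * Qᵀ)) := by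
    have hAA : Aᵀ * A = Aᴴ * A := by rw [Matrix.conjTranspose_eq_transpose_of_trivial]
    rw [hAA, hspec]
    ext a b
    have lhs : (U * Matrix.diagonal hH.eigenvalues * Uᵀ) a b
        = ∑ i, U a i * hH.eigenvalues i * U b i := by
      rw [Matrix.mul_apply]
      congr 1
      funext i
      rw [Matrix.mul_diagonal, Matrix.transpose_apply]
    have hDDQ : D * (D * Qᵀ) = Matrix.diagonal (fun i => ν i ^ 2) * Qᵀ := by
      rw [← Matrix.mul_assoc, hDdef, Matrix.diagonal_mul_diagonal]
      congr 2
      funext i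
      ring
    rw [lhs, hDDQ, Matrix.mul_apply]
    calc ∑ i, U a i * hH.eigenvalues i * U b i
        = ∑ i, (fun j => Q a j * ν j ^ 2 * Q b j) (τ i) := by
          apply Finset.sum_congr rfl
          intro i _
          simp only [hQdef, Matrix.of_apply, Equiv.symm_apply_apply]
          rw [heig i]
      _ = ∑ j, Q a j * ν j ^ 2 * Q b j := by
          exact Equiv.sum_comp τ (fun j => Q a j * ν j ^ 2 * Q b j)
      _ = ∑ j, Q a j * ((Matrix.diagonal fun i => ν i ^ 2) * Qᵀ) j b := by
          apply Finset.sum_congr rfl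
          intro j _
          rw [Matrix.diagonal_mul, Matrix.transpose_apply]
          ring
  refine ⟨A * Q * Dinv, Qᵀ, ?_, ?_, ?_, ?_, ?_⟩
  · -- (A Q Dinv)ᵀ (A Q Dinv) = 1
    have key : (A * Q * Dinv)ᵀ * (A * Q * Dinv) = 1 := by
      rw [Matrix.transpose_mul, Matrix.transpose_mul]
      have hDt : Dinvᵀ = Dinv := Matrix.diagonal_transpose _
      rw [hDt]
      have e : Aᵀ * A * (Q * Dinv) = Q * (D * (D * (Qᵀ * (Q * Dinv)))) := by
        rw [hQspec]; simp only [Matrix.mul_assoc]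
      calc Dinv * (Qᵀ * Aᵀ) * (A * Q * Dinv)
          = Dinv * (Qᵀ * (Aᵀ * A * (Q * Dinv))) := by simp only [Matrix.mul_assoc]
        _ = Dinv * (Qᵀ * (Q * (D * (D * (Qᵀ * (Q * Dinv)))))) := by rw [e]
        _ = Dinv * (D * (D * Dinv)) := by
            rw [← Matrix.mul_assoc Qᵀ Q, hQ1, Matrix.one_mul, ← Matrix.mul_assoc Qᵀ Q, hQ1,
              Matrix.one_mul]
        _ = 1 := by rw [hDD, Matrix.mul_one, hDD']
    exact key
  · -- other side
    have key : (A * Q * Dinv)ᵀ * (A * Q * Dinv) = 1 := by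
      rw [Matrix.transpose_mul, Matrix.transpose_mul]
      have hDt : Dinvᵀ = Dinv := Matrix.diagonal_transpose _
      rw [hDt]
      have e : Aᵀ * A * (Q * Dinv) = Q * (D * (D * (Qᵀ * (Q * Dinv)))) := by
        rw [hQspec]; simp only [Matrix.mul_assoc]
      calc Dinv * (Qᵀ * Aᵀ) * (A * Q * Dinv)
          = Dinv * (Qᵀ * (Aᵀ * A * (Q * Dinv))) := by simp only [Matrix.mul_assoc]
        _ = Dinv * (Qᵀ * (Q * (D * (D * (Qᵀ * (Q * Dinv)))))) := by rw [e]
        _ = Dinv * (D * (D * Dinv)) := by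
            rw [← Matrix.mul_assoc Qᵀ Q, hQ1, Matrix.one_mul, ← Matrix.mul_assoc Qᵀ Q, hQ1,
              Matrix.one_mul]
        _ = 1 := by rw [hDD, Matrix.mul_one, hDD']
    exact mul_eq_one_comm.mp key
  · rw [Matrix.transpose_transpose]; exact hQ2
  · rw [Matrix.transpose_transpose]; exact hQ1
  · -- A = (A Q Dinv) D Qᵀ
    calc A = A * (Q * Qᵀ) := by rw [hQ2, Matrix.mul_one]
      _ = A * (Q * ((Dinv * D) * Qᵀ)) := by rw [hDD', Matrix.one_mul]
      _ = A * Q * Dinv * D * Qᵀ := by simp only [Matrix.mul_assoc]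

end P6
section P7

open Equiv Finset

variable {R : Type*} [CommRing R] {d m : ℕ}

/-- index type for compound matrices: subsets of `Fin d` of size `m` -/
abbrev Idx (d m : ℕ) := {S : Finset (Fin d) // S.card = m}

/-- the increasing enumeration of a size-`m` subset -/
def emb (S : Idx d m) : Fin m → Fin d := S.1.orderEmbOfFin S.2

lemma emb_injective (S : Idx d m) : Function.Injective (emb S) :=
  (S.1.orderEmbOfFin S.2).injective

lemma emb_mem (S : Idx d m) (i : Fin m) : emb S i ∈ S.1 := Finset.orderEmbOfFin_mem _ _ _

lemma image_emb (S : Idx d m) : Finset.univ.image (emb S) = S.1 := by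
  apply Finset.coe_injective
  rw [Finset.coe_image, Finset.coe_univ, Set.image_univ]
  exact Finset.range_orderEmbOfFin S.1 S.2

/-- size-`m` subsets with an enumeration correspond to injective maps -/
def injOf (S : Idx d m) (π : Equiv.Perm (Fin m)) : {p : Fin m → Fin d // Function.Injective p} :=
  ⟨emb S ∘ π, (emb_injective S).comp π.injective⟩

lemma injOf_bijective :
    Function.Bijective (fun x : Idx d m × Equiv.Perm (Fin m) => injOf x.1 x.2) := by
  constructor
  · rintro ⟨S, π⟩ ⟨T, ρ⟩ h
    have h' : emb S ∘ π = emb T ∘ ρ := congrArg Subtype.val h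
    have himg : ∀ (W : Idx d m) (σ : Equiv.Perm (Fin m)),
        Finset.univ.image (emb W ∘ σ) = W.1 := by
      intro W σ
      rw [← Finset.image_image, Finset.image_univ_equiv, image_emb]
    have hST : S = T := by
      apply Subtype.ext
      rw [← himg S π, ← himg T ρ, h']
    subst hST
    have hπρ : π = ρ := by
      apply Equiv.ext
      intro x
      exact emb_injective S (congrFun h' x)
    rw [hπρ]
  · rintro ⟨p, hp⟩
    have hcard : (Finset.univ.image p).card = m := by
      rw [Finset.card_image_of_injective _ hp, Finset.card_univ, Fintype.card_fin]
    set S : Idx d m := ⟨Finset.univ.image p, hcard⟩ with hS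
    have hmem : ∀ x, p x ∈ S.1 := fun x => Finset.mem_image_of_mem p (Finset.mem_univ x)
    set π0 : Fin m → Fin m := fun x => (S.1.orderIsoOfFin S.2).symm ⟨p x, hmem x⟩ with hπ0
    have hπinj : Function.Injective π0 := by
      intro x y hxy
      apply hp
      have := congrArg (S.1.orderIsoOfFin S.2) hxy
      rw [OrderIso.apply_symm_apply, OrderIso.apply_symm_apply] at this
      exact congrArg Subtype.val this
    have hπbij : Function.Bijective π0 := (Finite.injective_iff_bijective).mp hπinj
    refine ⟨⟨S, Equiv.ofBijective π0 hπbij⟩, ?_⟩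
    apply Subtype.ext
    funext x
    show emb S (π0 x) = p x
    rw [emb, ← Finset.coe_orderIsoOfFin_apply, hπ0]
    rw [OrderIso.apply_symm_apply]

end P7
section P8

open Equiv Finset Equiv.Perm

variable {R : Type*} [CommRing R] {d m : ℕ}

local notation "ε " σ:arg => ((Equiv.Perm.sign σ : ℤ) : R)

theorem det_mul_aux_rect {M : Matrix (Fin m) (Fin d) R} {N : Matrix (Fin d) (Fin m) R}
    {p : Fin m → Fin d} (H : ¬Function.Injective p) :
    (∑ σ : Equiv.Perm (Fin m), ε σ * ∏ x, M (σ x) (p x) * N (p x) x) = 0 := by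
  obtain ⟨i, j, hpij, hij⟩ : ∃ i j, p i = p j ∧ i ≠ j := by
    rw [Function.Injective] at H
    push_neg at H
    obtain ⟨i, j, h1, h2⟩ := H
    exact ⟨i, j, h1, h2⟩
  exact
    Finset.sum_involution (fun σ _ => σ * Equiv.swap i j)
      (fun σ _ => by
        have : (∏ x, M (σ x) (p x)) = ∏ x, M ((σ * Equiv.swap i j) x) (p x) :=
          Fintype.prod_equiv (Equiv.swap i j) _ _ (by simp [Equiv.apply_swap_eq_self hpij])
        simp [this, sign_swap hij, -sign_swap', Finset.prod_mul_distrib])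
      (fun σ _ _ => (not_congr mul_swap_eq_iff).mpr hij) (fun _ _ => Finset.mem_univ _)
      fun σ _ => mul_swap_involutive i j σ

theorem cauchy_binet (M : Matrix (Fin m) (Fin d) R) (N : Matrix (Fin d) (Fin m) R) :
    (M * N).det
      = ∑ S : Idx d m, (M.submatrix id (emb S)).det * (N.submatrix (emb S) id).det := by
  have hdetM : ∀ (S : Idx d m) (π : Equiv.Perm (Fin m)),
      (∑ σ : Equiv.Perm (Fin m), ε σ * ∏ i, M (σ i) (emb S (π i)))
        = ε π * (M.submatrix id (emb S)).det := by
    intro S π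
    rw [Matrix.det_apply', Finset.mul_sum]
    apply Fintype.sum_equiv (Equiv.mulRight π⁻¹)
    intro τ
    simp only [Equiv.coe_mulRight, Matrix.submatrix_apply, id_eq]
    have h1 : (∏ i, M (τ i) (emb S (π i))) = ∏ x, M ((τ * π⁻¹) x) (emb S x) := by
      rw [← Equiv.prod_comp π (fun x => M ((τ * π⁻¹) x) (emb S x))]
      apply Finset.prod_congr rfl
      intro i _
      simp
    have h2 : (Equiv.Perm.sign (τ * π⁻¹) : ℤ) = (Equiv.Perm.sign τ : ℤ) * (Equiv.Perm.sign π : ℤ) := by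
      rw [Equiv.Perm.sign_mul, Equiv.Perm.sign_inv]
      push_cast
      ring
    have h3 : ((Equiv.Perm.sign π : ℤ) : R) * ((Equiv.Perm.sign π : ℤ) : R) = 1 := by
      have hz : ((Equiv.Perm.sign π : ℤ) * (Equiv.Perm.sign π : ℤ)) = 1 := by
        rw [← Units.val_mul, Int.units_mul_self, Units.val_one]
      calc ((Equiv.Perm.sign π : ℤ) : R) * ((Equiv.Perm.sign π : ℤ) : R)
          = (((Equiv.Perm.sign π : ℤ) * (Equiv.Perm.sign π : ℤ) : ℤ) : R) := by push_cast; ring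
        _ = 1 := by rw [hz]; norm_num
    rw [h1]
    show _ = _ * (((Equiv.Perm.sign (τ * π⁻¹) : ℤ) : R) * _)
    rw [h2]
    push_cast
    calc ((Equiv.Perm.sign τ : ℤ) : R) * ∏ x, M ((τ * π⁻¹) x) (emb S x)
        = (((Equiv.Perm.sign π : ℤ) : R) * ((Equiv.Perm.sign π : ℤ) : R)) *
            (((Equiv.Perm.sign τ : ℤ) : R) * ∏ x, M ((τ * π⁻¹) x) (emb S x)) := by rw [h3, one_mul]
      _ = ((Equiv.Perm.sign π : ℤ) : R) *
            (((Equiv.Perm.sign τ : ℤ) : R) * ((Equiv.Perm.sign π : ℤ) : R) *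
              ∏ x, M ((τ * π⁻¹) x) (emb S x)) := by ring
  have inner : ∀ S : Idx d m,
      (∑ π : Equiv.Perm (Fin m), ∑ σ : Equiv.Perm (Fin m),
        ε σ * ∏ i, M (σ i) (emb S (π i)) * N (emb S (π i)) i)
        = (M.submatrix id (emb S)).det * (N.submatrix (emb S) id).det := by
    intro S
    have hsplit : ∀ π : Equiv.Perm (Fin m),
        (∑ σ : Equiv.Perm (Fin m), ε σ * ∏ i, M (σ i) (emb S (π i)) * N (emb S (π i)) i)
          = (∏ i, N (emb S (π i)) i) *
            (∑ σ : Equiv.Perm (Fin m), ε σ * ∏ i, M (σ i) (emb S (π i))) := by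
      intro π
      rw [Finset.mul_sum]
      apply Finset.sum_congr rfl
      intro σ _
      rw [Finset.prod_mul_distrib]
      ring
    calc (∑ π : Equiv.Perm (Fin m), ∑ σ : Equiv.Perm (Fin m),
        ε σ * ∏ i, M (σ i) (emb S (π i)) * N (emb S (π i)) i)
        = ∑ π : Equiv.Perm (Fin m), (∏ i, N (emb S (π i)) i) * (ε π * (M.submatrix id (emb S)).det) := by
          apply Finset.sum_congr rfl
          intro π _
          rw [hsplit π, hdetM S π]
      _ = (M.submatrix id (emb S)).det * ∑ π : Equiv.Perm (Fin m), ε π * ∏ i, N (emb S (π i)) i := by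
          rw [Finset.mul_sum]
          apply Finset.sum_congr rfl
          intro π _
          ring
      _ = (M.submatrix id (emb S)).det * (N.submatrix (emb S) id).det := by
          have hdetN : (N.submatrix (emb S) id).det
              = ∑ π : Equiv.Perm (Fin m), ε π * ∏ i, N (emb S (π i)) i := by
            rw [Matrix.det_apply']
            apply Finset.sum_congr rfl
            intro π _
            simp only [Matrix.submatrix_apply, id_eq]
          rw [hdetN]
  calc (M * N).det
      = ∑ p : Fin m → Fin d, ∑ σ : Equiv.Perm (Fin m), ε σ * ∏ i, M (σ i) (p i) * N (p i) i := by
        simp only [Matrix.det_apply', Matrix.mul_apply, Finset.prod_univ_sum, Finset.mul_sum,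
          Fintype.piFinset_univ]
        rw [Finset.sum_comm]
    _ = ∑ p ∈ Finset.univ.filter (fun p : Fin m → Fin d => Function.Injective p),
          ∑ σ : Equiv.Perm (Fin m), ε σ * ∏ i, M (σ i) (p i) * N (p i) i := by
        refine (Finset.sum_subset (Finset.filter_subset _ _) fun p _ hp => det_mul_aux_rect ?_).symm
        simpa using hp
    _ = ∑ q : {p : Fin m → Fin d // Function.Injective p},
          ∑ σ : Equiv.Perm (Fin m), ε σ * ∏ i, M (σ i) (q.1 i) * N (q.1 i) i := by
        exact Finset.sum_subtype
          (Finset.univ.filter fun p : Fin m → Fin d => Function.Injective p)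
          (fun p => by simp)
          (fun p => ∑ σ : Equiv.Perm (Fin m), ε σ * ∏ i, M (σ i) (p i) * N (p i) i)
    _ = ∑ x : Idx d m × Equiv.Perm (Fin m),
          ∑ σ : Equiv.Perm (Fin m), ε σ * ∏ i, M (σ i) ((injOf x.1 x.2).1 i) * N ((injOf x.1 x.2).1 i) i := by
        exact (Fintype.sum_bijective _ injOf_bijective _ _ (fun x => rfl)).symm
    _ = ∑ S : Idx d m, ∑ π : Equiv.Perm (Fin m),
          ∑ σ : Equiv.Perm (Fin m), ε σ * ∏ i, M (σ i) (emb S (π i)) * N (emb S (π i)) i := by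
        rw [Fintype.sum_prod_type]
        rfl
    _ = ∑ S : Idx d m, (M.submatrix id (emb S)).det * (N.submatrix (emb S) id).det := by
        apply Finset.sum_congr rfl
        intro S _
        exact inner S

end P8
section P9

open Finset

variable {R : Type*} [CommRing R] {d m : ℕ}

/-- the `m`-th compound matrix -/
def cpd (m : ℕ) (A : Matrix (Fin d) (Fin d) R) : Matrix (Idx d m) (Idx d m) R :=
  Matrix.of fun S T => (A.submatrix (emb S) (emb T)).det

lemma cpd_apply (A : Matrix (Fin d) (Fin d) R) (S T : Idx d m) :
    cpd m A S T = (A.submatrix (emb S) (emb T)).det := rfl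

lemma cpd_mul (A B : Matrix (Fin d) (Fin d) R) :
    cpd m (A * B) = cpd m A * cpd m B := by
  ext S T
  have h : (A * B).submatrix (emb S) (emb T)
      = A.submatrix (emb S) id * B.submatrix id (emb T) := by
    have := Matrix.submatrix_mul_equiv A B (emb S) (Equiv.refl (Fin d)) (emb T)
    rw [← this]
    rfl
  rw [cpd_apply, h, cauchy_binet, Matrix.mul_apply]
  apply Finset.sum_congr rfl
  intro U _
  rw [cpd_apply, cpd_apply, Matrix.submatrix_submatrix, Matrix.submatrix_submatrix]
  simp

lemma cpd_transpose (A : Matrix (Fin d) (Fin d) R) :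
    cpd m Aᵀ = (cpd m A)ᵀ := by
  ext S T
  rw [Matrix.transpose_apply, cpd_apply, cpd_apply, ← Matrix.transpose_submatrix,
    Matrix.det_transpose]

lemma cpd_diagonal (v : Fin d → R) :
    cpd m (Matrix.diagonal v) = Matrix.diagonal (fun S : Idx d m => ∏ i ∈ S.1, v i) := by
  ext S T
  by_cases hST : S = T
  · subst hST
    rw [cpd_apply, Matrix.diagonal_apply_eq,
      Matrix.submatrix_diagonal v (emb S) (emb_injective S), Matrix.det_diagonal]
    rw [← image_emb S, Finset.prod_image]
    · rfl
    · intro x _ y _ hxy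
      exact emb_injective S hxy
  · rw [cpd_apply, Matrix.diagonal_apply_ne _ hST]
    -- find an element of T not in S
    have hTS : ¬ T.1 ⊆ S.1 := by
      intro hsub
      apply hST
      apply Subtype.ext
      exact (Finset.eq_of_subset_of_card_le hsub (by rw [S.2, T.2])).symm
    obtain ⟨t, htT, htS⟩ := Finset.not_subset.mp hTS
    obtain ⟨j, _, hj⟩ : ∃ j ∈ Finset.univ, emb T j = t := by
      have := image_emb T
      rw [← this] at htT
      simpa using Finset.mem_image.mp htT
  -- column j is zero
    apply Matrix.det_eq_zero_of_column_eq_zero j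
    intro i
    rw [Matrix.submatrix_apply, Matrix.diagonal_apply_ne]
    intro hc
    apply htS
    rw [← hj, ← hc]
    exact emb_mem S i

lemma cpd_one : cpd m (1 : Matrix (Fin d) (Fin d) R) = 1 := by
  rw [← Matrix.diagonal_one, cpd_diagonal]
  rw [← Matrix.diagonal_one]
  congr 1
  funext S
  simp

end P9
section P10

open Finset

variable {d m : ℕ}

/-- number of size-`m` subsets -/
abbrev Nc (d m : ℕ) : ℕ := Fintype.card (Idx d m)

/-- enumeration of size-`m` subsets -/
noncomputable def eIdx (d m : ℕ) : Idx d m ≃ Fin (Nc d m) := Fintype.equivFin _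

/-- the compound matrix, reindexed by `Fin` -/
noncomputable def CM (m : ℕ) (A : Matrix (Fin d) (Fin d) ℝ) :
    Matrix (Fin (Nc d m)) (Fin (Nc d m)) ℝ :=
  (cpd m A).submatrix (eIdx d m).symm (eIdx d m).symm

lemma CM_mul (A B : Matrix (Fin d) (Fin d) ℝ) : CM m (A * B) = CM m A * CM m B := by
  rw [CM, CM, CM, cpd_mul]
  exact (Matrix.submatrix_mul_equiv (cpd m A) (cpd m B)
    (eIdx d m).symm (eIdx d m).symm (eIdx d m).symm).symm

lemma CM_transpose (A : Matrix (Fin d) (Fin d) ℝ) : CM m Aᵀ = (CM m A)ᵀ := by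
  rw [CM, CM, cpd_transpose, ← Matrix.transpose_submatrix]

lemma CM_one : CM m (1 : Matrix (Fin d) (Fin d) ℝ) = 1 := by
  rw [CM, cpd_one]
  exact Matrix.submatrix_one_equiv (eIdx d m).symm

lemma CM_diagonal (v : Fin d → ℝ) :
    CM m (Matrix.diagonal v)
      = Matrix.diagonal (fun k : Fin (Nc d m) => ∏ i ∈ ((eIdx d m).symm k).1, v i) := by
  rw [CM, cpd_diagonal]
  exact Matrix.submatrix_diagonal _ _ (eIdx d m).symm.injective

lemma CM_orth {Q : Matrix (Fin d) (Fin d) ℝ} (h1 : Qᵀ * Q = 1) :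
    (CM m Q)ᵀ * CM m Q = 1 := by
  rw [← CM_transpose, ← CM_mul, h1, CM_one]

lemma CM_orth' {Q : Matrix (Fin d) (Fin d) ℝ} (h2 : Q * Qᵀ = 1) :
    CM m Q * (CM m Q)ᵀ = 1 := by
  rw [← CM_transpose, ← CM_mul, h2, CM_one]

lemma svmul_diagonal {n : ℕ} (w : Fin n → ℝ) (hw : ∀ i, 0 ≤ w i) :
    svmul (Matrix.diagonal w) = Finset.univ.val.map w := by
  rw [svmul_eq_roots]
  have hct : (Matrix.diagonal w)ᴴ = Matrix.diagonal w := by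
    rw [Matrix.conjTranspose_eq_transpose_of_trivial, Matrix.diagonal_transpose]
  rw [hct, Matrix.diagonal_mul_diagonal, charpoly_diagonal]
  have : (∏ i : Fin n, (Polynomial.X - Polynomial.C (w i * w i)))
      = ((Finset.univ.val.map (fun i => w i * w i)).map
          (fun a => Polynomial.X - Polynomial.C a)).prod := by
    rw [Multiset.map_map]
    rfl
  rw [this, Polynomial.roots_multiset_prod_X_sub_C, Multiset.map_map]
  apply Multiset.map_congr rfl
  intro i _
  exact Real.sqrt_mul_self (hw i)

lemma le_emb_nat (S : Idx d m) : ∀ k (h : k < m), k ≤ (emb S ⟨k, h⟩ : ℕ) := by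
  have hsm : StrictMono (emb S) := (S.1.orderEmbOfFin S.2).strictMono
  intro k
  induction k with
  | zero => intro h; exact Nat.zero_le _
  | succ n ih =>
    intro h
    have hn : n < m := lt_trans (Nat.lt_succ_self n) h
    have h1 : emb S ⟨n, hn⟩ < emb S ⟨n + 1, h⟩ := by
      apply hsm
      rw [Fin.lt_def]
      exact Nat.lt_succ_self n
    have h1' : (emb S ⟨n, hn⟩ : ℕ) < (emb S ⟨n + 1, h⟩ : ℕ) := h1
    have h2 := ih hn
    omega

lemma prod_over_subset_le (A : Matrix (Fin d) (Fin d) ℝ) (S : Idx d m) :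
    ∏ i ∈ S.1, sval A (i : ℕ) ≤ ∏ l ∈ Finset.range m, sval A l := by
  have h1 : ∏ i ∈ S.1, sval A (i : ℕ) = ∏ j : Fin m, sval A ((emb S j : Fin d) : ℕ) := by
    rw [← image_emb S, Finset.prod_image]
    intro x _ y _ hxy
    exact emb_injective S hxy
  have h2 : ∏ l ∈ Finset.range m, sval A l = ∏ j : Fin m, sval A (j : ℕ) :=
    (Fin.prod_univ_eq_prod_range (fun l => sval A l) m).symm
  rw [h1, h2]
  apply Finset.prod_le_prod
  · intro j _
    exact sval_nonneg A _
  · intro j _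
    apply sval_anti
    exact le_emb_nat S (j : ℕ) j.isLt

/-- the top subset `{0, ..., m-1}` -/
def topS (hm : m ≤ d) : Idx d m :=
  ⟨(Finset.univ : Finset (Fin m)).map (Fin.castLEEmb hm), by simp⟩

lemma prod_topS (A : Matrix (Fin d) (Fin d) ℝ) (hm : m ≤ d) :
    ∏ i ∈ (topS hm).1, sval A (i : ℕ) = ∏ l ∈ Finset.range m, sval A l := by
  rw [topS, Finset.prod_map]
  have h2 : ∏ l ∈ Finset.range m, sval A l = ∏ j : Fin m, sval A (j : ℕ) :=
    (Fin.prod_univ_eq_prod_range (fun l => sval A l) m).symm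
  rw [h2]
  apply Finset.prod_congr rfl
  intro j _
  have : ((Fin.castLEEmb hm j : Fin d) : ℕ) = (j : ℕ) := rfl
  rw [this]

/-- main lemma: top singular value of the compound matrix -/
lemma sval0_CM {A : Matrix (Fin d) (Fin d) ℝ} (hA : IsUnit A.det) (hm : m ≤ d) :
    sval (CM m A) 0 = ∏ l ∈ Finset.range m, sval A l := by
  obtain ⟨Q₁, Q₂, h11, h12, h21, h22, hAeq⟩ := svd hA
  set ν : Fin d → ℝ := fun i : Fin d => sval A (i : ℕ) with hν
  have hCM : CM m A = CM m Q₁ * (CM m (Matrix.diagonal ν) * CM m Q₂) := by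
    conv_lhs => rw [hAeq]
    rw [CM_mul, CM_mul, Matrix.mul_assoc]
  have hs1 : sval (CM m A) = sval (CM m (Matrix.diagonal ν) * CM m Q₂) := by
    rw [hCM]
    exact sval_orth_left (CM_orth h11)
  have hs2 : sval (CM m (Matrix.diagonal ν) * CM m Q₂) = sval (CM m (Matrix.diagonal ν)) :=
    sval_orth_right (CM_orth h21) (CM_orth' h22)
  set w : Fin (Nc d m) → ℝ := fun k => ∏ i ∈ ((eIdx d m).symm k).1, ν i with hw
  have hCMD : CM m (Matrix.diagonal ν) = Matrix.diagonal w := CM_diagonal ν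
  have hwnn : ∀ k, 0 ≤ w k := by
    intro k
    apply Finset.prod_nonneg
    intro i _
    exact sval_nonneg A _
  have hsvm : svmul (CM m (Matrix.diagonal ν)) = Finset.univ.val.map w := by
    rw [hCMD]
    exact svmul_diagonal w hwnn
  have hN : 0 < Nc d m := by
    rw [Nc, Fintype.card_pos_iff]
    exact ⟨topS hm⟩
  rw [hs1, hs2]
  -- now show sval (diag) 0 = ∏_{l<m} sval A l
  apply le_antisymm
  · -- sval 0 is one of the w k, each ≤ the product
    have hmem := sval_mem (CM m (Matrix.diagonal ν)) hN
    rw [hsvm] at hmem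
    obtain ⟨k, _, hk⟩ := Multiset.mem_map.mp hmem
    rw [← hk, hw]
    exact prod_over_subset_le A _
  · -- the product equals w at the top subset, which is ≤ sval 0
    have hmem : w ((eIdx d m) (topS hm)) ∈ svmul (CM m (Matrix.diagonal ν)) := by
      rw [hsvm]
      exact Multiset.mem_map_of_mem _ (Finset.mem_univ_val _)
    have hle := le_sval_zero _ hmem
    have hval : w ((eIdx d m) (topS hm)) = ∏ l ∈ Finset.range m, sval A l := by
      rw [hw]
      simp only [Equiv.symm_apply_apply]
      exact prod_topS A hm
    rw [← hval]
    exact hle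

end P10
section P11

variable {d : ℕ}

lemma prod_sval_submul {m : ℕ} (hm : m ≤ d) (A B : Matrix (Fin d) (Fin d) ℝ)
    (hA : IsUnit A.det) (hB : IsUnit B.det) :
    ∏ l ∈ Finset.range m, sval (A * B) l
      ≤ (∏ l ∈ Finset.range m, sval A l) * (∏ l ∈ Finset.range m, sval B l) := by
  have hAB : IsUnit (A * B).det := by rw [Matrix.det_mul]; exact hA.mul hB
  rw [← sval0_CM hAB hm, ← sval0_CM hA hm, ← sval0_CM hB hm, CM_mul]
  exact sval0_submul _ _

lemma prod_sval_pos {m : ℕ} (hm : m ≤ d) {A : Matrix (Fin d) (Fin d) ℝ} (hA : IsUnit A.det) :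
    0 < ∏ l ∈ Finset.range m, sval A l := by
  apply Finset.prod_pos
  intro l hl
  exact sval_pos hA (lt_of_lt_of_le (Finset.mem_range.mp hl) hm)

end P11
end PhiAux


/-- The singular value function `φ^s`: for `0 ≤ s < d` with `k = ⌊s⌋`,
`φ^s(A) = α_1(A)···α_k(A)·α_{k+1}(A)^(s-k)`; for `s ≥ d`,
`φ^s(A) = (α_1(A)···α_d(A))^(s/d)`. (Here `sval A l` is `α_{l+1}(A)`.) -/
noncomputable def phi {d : ℕ} (s : ℝ) (A : Matrix (Fin d) (Fin d) ℝ) : ℝ :=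
  if s < d then
    (∏ l ∈ Finset.range ⌊s⌋₊, sval A l) * sval A ⌊s⌋₊ ^ (s - (⌊s⌋₊ : ℝ))
  else (∏ l ∈ Finset.range d, sval A l) ^ (s / d)

/-- the singular value function is submultiplicative for `0 ≤ s < d`. -/
theorem phi_submultiplicative (d : ℕ) (s : ℝ) (hs : 0 ≤ s) (hsd : s < d)
    (A B : Matrix (Fin d) (Fin d) ℝ) (hA : IsUnit A.det) (hB : IsUnit B.det) :
    phi s (A * B) ≤ phi s A * phi s B := by
  classical
  set k : ℕ := ⌊s⌋₊ with hk
  set θ : ℝ := s - (k : ℝ) with hθ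
  have hkd : k < d := (Nat.floor_lt hs).mpr hsd
  have hk1d : k + 1 ≤ d := hkd
  have hθ0 : 0 ≤ θ := sub_nonneg.mpr (Nat.floor_le hs)
  have hθ1 : θ ≤ 1 := by
    have := Nat.lt_floor_add_one s
    rw [hθ]
    push_cast
    linarith
  have hAB : IsUnit (A * B).det := by rw [Matrix.det_mul]; exact hA.mul hB
  -- phi in interpolated form
  have key : ∀ {X : Matrix (Fin d) (Fin d) ℝ}, IsUnit X.det →
      phi s X = (∏ l ∈ Finset.range k, sval X l) ^ (1 - θ)
        * (∏ l ∈ Finset.range (k + 1), sval X l) ^ θ := by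
    intro X hX
    have hPk : 0 < ∏ l ∈ Finset.range k, sval X l := PhiAux.prod_sval_pos hkd.le hX
    have hsv : 0 < sval X k := PhiAux.sval_pos hX hkd
    rw [phi, if_pos hsd]
    rw [Finset.prod_range_succ]
    rw [Real.mul_rpow hPk.le hsv.le]
    rw [← mul_assoc, ← Real.rpow_add hPk, sub_add_cancel, Real.rpow_one]
  rw [key hAB, key hA, key hB]
  have h1θ : 0 ≤ 1 - θ := by linarith
  have hsub_k := PhiAux.prod_sval_submul hkd.le A B hA hB
  have hsub_k1 := PhiAux.prod_sval_submul hk1d A B hA hB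
  have hABk : 0 ≤ ∏ l ∈ Finset.range k, sval (A * B) l := (PhiAux.prod_sval_pos hkd.le hAB).le
  have hABk1 : 0 ≤ ∏ l ∈ Finset.range (k + 1), sval (A * B) l :=
    (PhiAux.prod_sval_pos hk1d hAB).le
  have hAk : 0 < ∏ l ∈ Finset.range k, sval A l := PhiAux.prod_sval_pos hkd.le hA
  have hBk : 0 < ∏ l ∈ Finset.range k, sval B l := PhiAux.prod_sval_pos hkd.le hB
  have hAk1 : 0 < ∏ l ∈ Finset.range (k + 1), sval A l := PhiAux.prod_sval_pos hk1d hA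
  have hBk1 : 0 < ∏ l ∈ Finset.range (k + 1), sval B l := PhiAux.prod_sval_pos hk1d hB
  calc (∏ l ∈ Finset.range k, sval (A * B) l) ^ (1 - θ)
        * (∏ l ∈ Finset.range (k + 1), sval (A * B) l) ^ θ
      ≤ ((∏ l ∈ Finset.range k, sval A l) * (∏ l ∈ Finset.range k, sval B l)) ^ (1 - θ)
        * ((∏ l ∈ Finset.range (k + 1), sval A l)
            * (∏ l ∈ Finset.range (k + 1), sval B l)) ^ θ := by
        apply mul_le_mul
        · exact Real.rpow_le_rpow hABk hsub_k h1θ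
        · exact Real.rpow_le_rpow hABk1 hsub_k1 hθ0
        · exact Real.rpow_nonneg hABk1 θ
        · exact Real.rpow_nonneg (mul_nonneg hAk.le hBk.le) _
    _ = (∏ l ∈ Finset.range k, sval A l) ^ (1 - θ)
          * (∏ l ∈ Finset.range (k + 1), sval A l) ^ θ
        * ((∏ l ∈ Finset.range k, sval B l) ^ (1 - θ)
          * (∏ l ∈ Finset.range (k + 1), sval B l) ^ θ) := by
        rw [Real.mul_rpow hAk.le hBk.le, Real.mul_rpow hAk1.le hBk1.le]
        ring
end

section
/- Let μ be a Borel probability measure on I^ℕ, θ : I^ℕ → ℝ^d a continuous map, and P_m = {[i] : i ∈ I^m} the partition into cylinders of length m with entropy H_μ(P_m) < ∞. Define G(i) = -inf_{r>0} log ( μ(B^θ(i,r) ∩ [i|_m]) / μ(B^θ(i,r)) ), where B^θ(i,r) = θ^{-1}(B(θ(i),r)). Then ∫ G dμ ≤ H_μ(P_m) + log C + 1 < ∞, where C is the Besicovitch covering constant of ℝ^d. -/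
open scoped BigOperators ENNReal
open MeasureTheory Filter Set Metric Topology

/-- Product `A_{w 0} * ⋯ * A_{w (n-1)}` along a finite word `w ∈ I^n`. -/
noncomputable def wordProd {d : ℕ} {I : Type*} (A : I → Matrix (Fin d) (Fin d) ℝ)
    {n : ℕ} (w : Fin n → I) : Matrix (Fin d) (Fin d) ℝ :=
  (List.ofFn fun k => A (w k)).prod

/-- Product `A_{i_1} ⋯ A_{i_n}` along the first `n` letters of an infinite word. -/
noncomputable def seqProd {d : ℕ} {I : Type*} (A : I → Matrix (Fin d) (Fin d) ℝ)
    (i : ℕ → I) (n : ℕ) : Matrix (Fin d) (Fin d) ℝ :=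
  (List.ofFn fun k : Fin n => A (i k)).prod

/-- The cylinder `[i|_n]` of sequences agreeing with `i` in the first `n` coordinates. -/
def cyl {I : Type*} (i : ℕ → I) (n : ℕ) : Set (ℕ → I) := {j | ∀ k < n, j k = i k}

/-- The cylinder determined by a finite word `w ∈ I^m`. -/
def cylW {I : Type*} {m : ℕ} (w : Fin m → I) : Set (ℕ → I) := {j | ∀ k : Fin m, j k = w k}

/-- The left shift on `I^ℕ`. -/
def shift {I : Type*} (j : ℕ → I) : ℕ → I := fun k => j (k + 1)


section AuxLemmas

instance : Nonempty {r : ℝ // 0 < r} := ⟨⟨1, one_pos⟩⟩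
instance : Nonempty {q : ℚ // 0 < q} := ⟨⟨1, one_pos⟩⟩

section Aux
variable {X : Type*} [MetricSpace X] [MeasurableSpace X] [OpensMeasurableSpace X]

lemma biInter_closedBall (x : X) (u : ℝ) : ⋂ v > u, closedBall x v = closedBall x u := by
  ext y
  simp only [mem_iInter, mem_closedBall]
  constructor
  · intro h
    by_contra hlt
    push_neg at hlt
    rcases exists_between hlt with ⟨v, hv1, hv2⟩
    exact absurd (h v hv1) (not_le.2 hv2)
  · intro h v hv
    exact h.trans hv.le

lemma tendsto_measure_closedBall_gt (ρ : Measure X) [IsFiniteMeasure ρ] (x : X) (u : ℝ) :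
    Tendsto (fun v => ρ (closedBall x v)) (𝓝[>] u) (𝓝 (ρ (closedBall x u))) := by
  have h := tendsto_measure_biInter_gt (μ := ρ) (s := fun v => closedBall x v) (a := u)
    (fun r _ => measurableSet_closedBall.nullMeasurableSet)
    (fun i j _ hij => closedBall_subset_closedBall hij)
    ⟨u + 1, by linarith, measure_ne_top _ _⟩
  rwa [biInter_closedBall] at h

lemma measurable_measure_closedBall (ρ : Measure X) [IsFiniteMeasure ρ] (q : ℝ) :
    Measurable fun x => ρ (closedBall x q) := by
  apply UpperSemicontinuous.measurable
  intro x c hc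
  have h := tendsto_measure_closedBall_gt ρ x q
  have h2 : ∀ᶠ v in 𝓝[>] q, ρ (closedBall x v) < c := h.eventually (gt_mem_nhds hc)
  rcases (mem_nhdsGT_iff_exists_Ioc_subset).1 h2 with ⟨u, hu, hsub⟩
  have hu' : q < u := hu
  filter_upwards [ball_mem_nhds x (by linarith : (0:ℝ) < u - q)] with y hy
  have hsubB : closedBall y q ⊆ closedBall x u := by
    intro z hz
    simp only [mem_closedBall] at *
    have := dist_triangle z y x
    have hyx : dist y x < u - q := hy
    linarith
  calc ρ (closedBall y q) ≤ ρ (closedBall x u) := measure_mono hsubB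
    _ < c := hsub ⟨hu', le_rfl⟩

/-- The measurable majorant function. -/
noncomputable def Fk (κ ν : Measure X) (x : X) : ℝ≥0∞ :=
  ⨆ q : {q : ℚ // 0 < q}, ENNReal.ofReal
    (-(Real.log ((κ (closedBall x (q : ℝ))).toReal / (ν (closedBall x (q : ℝ))).toReal)))

lemma measurable_Fk (κ ν : Measure X) [IsFiniteMeasure κ] [IsFiniteMeasure ν] :
    Measurable (Fk κ ν) := by
  apply Measurable.iSup
  intro q
  apply ENNReal.measurable_ofReal.comp
  apply Measurable.neg
  exact Real.measurable_log.comp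
    (((measurable_measure_closedBall κ (q:ℝ)).ennreal_toReal).div
      ((measurable_measure_closedBall ν (q:ℝ)).ennreal_toReal))

lemma ratio_nonpos (a b : ℝ≥0∞) (hab : a ≤ b) (hb : b ≠ ∞) :
    Real.log (a.toReal / b.toReal) ≤ 0 := by
  rcases eq_or_ne b 0 with rfl | hb0
  · have : a = 0 := le_antisymm hab (zero_le)
    simp [this]
  · apply Real.log_nonpos (by positivity)
    rw [div_le_one (ENNReal.toReal_pos hb0 hb)]
    exact ENNReal.toReal_mono hb hab

lemma ratio_approx (κ ν : Measure X) [IsFiniteMeasure κ] [IsFiniteMeasure ν] (hle : κ ≤ ν)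
    (x : X) (u : ℝ) (hu : 0 < u) (ε : ℝ) (hε : 0 < ε) :
    ∃ q : ℚ, 0 < q ∧
      Real.log ((κ (closedBall x (q : ℝ))).toReal / (ν (closedBall x (q : ℝ))).toReal)
        ≤ Real.log ((κ (closedBall x u)).toReal / (ν (closedBall x u)).toReal) + ε := by
  set fx : ℝ → ℝ := fun v =>
    Real.log ((κ (closedBall x v)).toReal / (ν (closedBall x v)).toReal) with hfx
  have hnonpos : ∀ v : ℝ, fx v ≤ 0 := fun v =>
    ratio_nonpos _ _ (hle _) (measure_ne_top _ _)
  by_cases hdeg : (κ (closedBall x u)).toReal = 0 ∨ (ν (closedBall x u)).toReal = 0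
  · refine ⟨1, one_pos, ?_⟩
    have h0 : fx u = 0 := by
      rcases hdeg with h | h
      · rw [hfx]; simp [h]
      · have h0 : (κ (closedBall x u)).toReal = 0 := by
          have := ENNReal.toReal_mono (measure_ne_top ν _) (hle (closedBall x u))
          have hk : (κ (closedBall x u)).toReal ≤ 0 := h ▸ this
          linarith [ENNReal.toReal_nonneg (a := κ (closedBall x u))]
        rw [hfx]; simp [h0]
    have := hnonpos 1
    push_cast
    linarith
  · push_neg at hdeg
    obtain ⟨hk0, hn0⟩ := hdeg
    have hkpos : 0 < (κ (closedBall x u)).toReal :=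
      lt_of_le_of_ne ENNReal.toReal_nonneg (Ne.symm hk0)
    have hnpos : 0 < (ν (closedBall x u)).toReal :=
      lt_of_le_of_ne ENNReal.toReal_nonneg (Ne.symm hn0)
    have hκt : Tendsto (fun v => (κ (closedBall x v)).toReal) (𝓝[>] u)
        (𝓝 (κ (closedBall x u)).toReal) :=
      (ENNReal.tendsto_toReal (measure_ne_top _ _)).comp
        (tendsto_measure_closedBall_gt κ x u)
    have hνt : Tendsto (fun v => (ν (closedBall x v)).toReal) (𝓝[>] u)
        (𝓝 (ν (closedBall x u)).toReal) :=
      (ENNReal.tendsto_toReal (measure_ne_top _ _)).comp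
        (tendsto_measure_closedBall_gt ν x u)
    have hdiv := hκt.div hνt (ne_of_gt hnpos)
    have hratio : 0 < (κ (closedBall x u)).toReal / (ν (closedBall x u)).toReal :=
      div_pos hkpos hnpos
    have hlog : Tendsto fx (𝓝[>] u) (𝓝 (fx u)) :=
      ((Real.continuousAt_log (ne_of_gt hratio)).tendsto.comp hdiv)
    have hev : ∀ᶠ v in 𝓝[>] u, fx v < fx u + ε :=
      hlog.eventually (gt_mem_nhds (by linarith))
    rcases (mem_nhdsGT_iff_exists_Ioc_subset).1 hev with ⟨u', hu', hsub⟩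
    obtain ⟨q, hq1, hq2⟩ := exists_rat_btwn (show u < u' from hu')
    exact ⟨q, by exact_mod_cast hu.trans hq1, (hsub ⟨hq1, hq2.le⟩).le⟩

end Aux

lemma ofReal_neg_iInf_le_iSup {f : ℝ → ℝ}
    (h2 : ∀ r : {r : ℝ // 0 < r}, ∀ ε > (0:ℝ), ∃ q : {q : ℚ // 0 < q}, f q ≤ f r + ε) :
    ENNReal.ofReal (-(⨅ r : {r : ℝ // 0 < r}, f r))
      ≤ ⨆ q : {q : ℚ // 0 < q}, ENNReal.ofReal (-(f q)) := by
  by_cases hbd : BddBelow (Set.range fun r : {r : ℝ // 0 < r} => f (r : ℝ))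
  · apply ENNReal.le_of_forall_pos_le_add
    intro ε hε _
    set A := ⨅ r : {r : ℝ // 0 < r}, f (r : ℝ) with hA
    have h1 : A < A + ε / 2 := lt_add_of_pos_right _ (by positivity)
    obtain ⟨r, hr⟩ := exists_lt_of_ciInf_lt h1
    obtain ⟨q, hq⟩ := h2 r (ε / 2) (by positivity)
    have h3 : f (q : ℝ) < A + ε := by linarith
    calc ENNReal.ofReal (-A) ≤ ENNReal.ofReal (-(f (q : ℝ)) + ε) := by
          apply ENNReal.ofReal_le_ofReal; linarith
      _ ≤ ENNReal.ofReal (-(f (q : ℝ))) + ENNReal.ofReal ε := ENNReal.ofReal_add_le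
      _ ≤ (⨆ q : {q : ℚ // 0 < q}, ENNReal.ofReal (-(f q))) + ε := by
          gcongr
          · exact le_iSup (fun q : {q : ℚ // 0 < q} => ENNReal.ofReal (-(f q))) q
          · exact ENNReal.ofReal_coe_nnreal.le
  · rw [Real.iInf_of_not_bddBelow hbd]
    simp

/-- Domination of the true functional by `Fk`. -/
lemma ofReal_le_Fk {X : Type*} [MetricSpace X] [MeasurableSpace X] [OpensMeasurableSpace X]
    (κ ν : Measure X) [IsFiniteMeasure κ] [IsFiniteMeasure ν] (hle : κ ≤ ν) (x : X) :
    ENNReal.ofReal (-(⨅ r : {r : ℝ // 0 < r},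
        Real.log ((κ (closedBall x (r : ℝ))).toReal / (ν (closedBall x (r : ℝ))).toReal)))
      ≤ Fk κ ν x := by
  apply ofReal_neg_iInf_le_iSup
    (f := fun v : ℝ => Real.log ((κ (closedBall x v)).toReal / (ν (closedBall x v)).toReal))
  intro r ε hε
  obtain ⟨q, hq0, hqle⟩ := ratio_approx κ ν hle x r r.2 ε hε
  exact ⟨⟨q, hq0⟩, hqle⟩

lemma besi {X : Type*} [MetricSpace X] [MeasurableSpace X] [BorelSpace X]
    [SecondCountableTopology X] {N : ℕ} {τ : ℝ} (hτ : 1 < τ)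
    (hN : IsEmpty (Besicovitch.SatelliteConfig X N τ))
    (ν κ : Measure X) [IsProbabilityMeasure ν] (t R : ℝ) (S : Set X)
    (hS : ∀ x ∈ S, ∃ r : ℝ, 0 < r ∧ r ≤ R ∧
      κ (closedBall x r) ≤ ENNReal.ofReal t * ν (closedBall x r)) :
    κ S ≤ (N : ℝ≥0∞) * ENNReal.ofReal t := by
  choose! r hr0 hrR hrκ using hS
  let p : Besicovitch.BallPackage S X :=
    { c := fun x => (x : X)
      r := fun x => r x
      rpos := fun x => hr0 x x.2
      r_bound := R
      r_le := fun x => hrR x x.2 }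
  obtain ⟨s, hdisj, hcov⟩ := Besicovitch.exist_disjoint_covering_families hτ hN p
  have hrange : range p.c = S := Subtype.range_coe
  have hSsub : S ⊆ ⋃ k : Fin N, ⋃ j ∈ s k, ball (p.c j) (p.r j) :=
    hrange.symm.trans_subset hcov
  calc κ S ≤ κ (⋃ k : Fin N, ⋃ j ∈ s k, ball (p.c j) (p.r j)) := measure_mono hSsub
    _ ≤ ∑ k : Fin N, κ (⋃ j ∈ s k, ball (p.c j) (p.r j)) := measure_iUnion_fintype_le _ _
    _ ≤ ∑ _k : Fin N, ENNReal.ofReal t := by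
        apply Finset.sum_le_sum
        intro k _
        have hcnt : (s k).Countable := by
          apply Set.PairwiseDisjoint.countable_of_isOpen
            ((hdisj k).mono (fun j => ball_subset_closedBall))
            (fun j _ => isOpen_ball)
          intro j _
          exact ⟨p.c j, mem_ball_self (p.rpos j)⟩
        calc κ (⋃ j ∈ s k, ball (p.c j) (p.r j))
            ≤ ∑' j : s k, κ (ball (p.c (j : S)) (p.r (j : S))) := measure_biUnion_le κ hcnt _
          _ ≤ ∑' j : s k, ENNReal.ofReal t * ν (closedBall (p.c (j : S)) (p.r (j : S))) := by
              apply ENNReal.tsum_le_tsum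
              intro j
              exact (measure_mono ball_subset_closedBall).trans (hrκ _ (j : S).2)
          _ = ENNReal.ofReal t * ∑' j : s k, ν (closedBall (p.c (j : S)) (p.r (j : S))) :=
              ENNReal.tsum_mul_left
          _ = ENNReal.ofReal t * ν (⋃ j ∈ s k, closedBall (p.c j) (p.r j)) := by
              rw [measure_biUnion hcnt (hdisj k) (fun j _ => measurableSet_closedBall)]
          _ ≤ ENNReal.ofReal t * 1 := by
              gcongr
              exact prob_le_one
          _ = ENNReal.ofReal t := mul_one _
    _ = (N : ℝ≥0∞) * ENNReal.ofReal t := by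
        simp [Finset.sum_const, Finset.card_univ, nsmul_eq_mul]

/-- Tail bound for `Fk` via the Besicovitch covering theorem. -/
lemma Fk_tail_bound {X : Type*} [MetricSpace X] [MeasurableSpace X] [BorelSpace X]
    [SecondCountableTopology X] {N : ℕ} {τ : ℝ} (hτ : 1 < τ)
    (hN : IsEmpty (Besicovitch.SatelliteConfig X N τ))
    (ν κ : Measure X) [IsProbabilityMeasure ν] [IsFiniteMeasure κ] {s : ℝ} (hs : 0 < s) :
    κ {x | ENNReal.ofReal s < Fk κ ν x}
      ≤ (N : ℝ≥0∞) * ENNReal.ofReal (Real.exp (-s)) := by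
  set V : {q : ℚ // 0 < q} → Set X := fun q =>
    {x | Real.log ((κ (closedBall x (q:ℝ))).toReal / (ν (closedBall x (q:ℝ))).toReal) < -s}
    with hV
  have key : ∀ y : ℝ, ENNReal.ofReal s < ENNReal.ofReal (-y) ↔ y < -s := by
    intro y
    rw [ENNReal.ofReal_lt_ofReal_iff_of_nonneg hs.le]
    constructor <;> intro <;> linarith
  have hset : {x | ENNReal.ofReal s < Fk κ ν x} = ⋃ q, V q := by
    ext x
    constructor
    · intro hx
      rw [mem_setOf_eq, Fk, lt_iSup_iff] at hx
      obtain ⟨q, hq⟩ := hx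
      exact mem_iUnion.2 ⟨q, (key _).1 hq⟩
    · intro hx
      obtain ⟨q, hq⟩ := mem_iUnion.1 hx
      rw [mem_setOf_eq, Fk, lt_iSup_iff]
      exact ⟨q, (key _).2 hq⟩
  set W : ℕ → Set X := fun n => ⋃ (q : {q : ℚ // 0 < q}) (_ : (q : ℝ) ≤ n), V q with hW
  have hUW : (⋃ q, V q) = ⋃ n, W n := by
    ext x
    simp only [mem_iUnion, hW]
    constructor
    · rintro ⟨q, hq⟩
      exact ⟨⌈(q:ℝ)⌉₊, q, Nat.le_ceil _, hq⟩
    · rintro ⟨n, q, _, hq⟩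
      exact ⟨q, hq⟩
  have hmono : Monotone W := by
    intro n n' hnn
    apply Set.iUnion_mono fun q => ?_
    exact Set.iUnion_subset fun hqn => Set.subset_iUnion_of_subset
      (le_trans hqn (by exact_mod_cast hnn)) subset_rfl
  rw [hset, hUW, Directed.measure_iUnion hmono.directed_le]
  apply iSup_le
  intro n
  apply besi hτ hN ν κ (Real.exp (-s)) n
  intro x hx
  simp only [hW, mem_iUnion] at hx
  obtain ⟨q, hqn, hq⟩ := hx
  refine ⟨(q:ℝ), by exact_mod_cast q.2, hqn, ?_⟩
  replace hq : Real.log ((κ (closedBall x (q:ℝ))).toReal / (ν (closedBall x (q:ℝ))).toReal) < -s := hq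
  set a := (κ (closedBall x (q:ℝ))).toReal
  set b := (ν (closedBall x (q:ℝ))).toReal
  have hratio : 0 < a / b := by
    rcases lt_or_ge 0 (a / b) with h | h
    · exact h
    · exfalso
      have : a / b = 0 := le_antisymm h (by positivity)
      rw [this, Real.log_zero] at hq
      linarith
  have hb : 0 < b := by
    rcases lt_or_ge 0 b with h | h
    · exact h
    · exfalso
      have hb0 : b = 0 := le_antisymm h (by positivity)
      rw [hb0, div_zero] at hratio
      exact lt_irrefl _ hratio
  have hab : a / b < Real.exp (-s) := by
    have := (Real.log_lt_log_iff hratio (Real.exp_pos _)).1 (by rwa [Real.log_exp])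
    exact this
  have ha : a < Real.exp (-s) * b := by
    rw [div_lt_iff₀ hb] at hab
    linarith
  calc κ (closedBall x (q:ℝ)) = ENNReal.ofReal a := (ENNReal.ofReal_toReal (measure_ne_top _ _)).symm
    _ ≤ ENNReal.ofReal (Real.exp (-s) * b) := ENNReal.ofReal_le_ofReal ha.le
    _ = ENNReal.ofReal (Real.exp (-s)) * ENNReal.ofReal b :=
        ENNReal.ofReal_mul (Real.exp_pos _).le
    _ = ENNReal.ofReal (Real.exp (-s)) * ν (closedBall x (q:ℝ)) := by
        rw [ENNReal.ofReal_toReal (measure_ne_top _ _)]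


lemma integral_min_bound (C a : ℝ) (hC : 1 ≤ C) (ha : 0 < a) (ha1 : a ≤ 1) :
    (∫⁻ t in Ioi (0:ℝ), min (ENNReal.ofReal a) (ENNReal.ofReal (C * Real.exp (-t))))
      ≤ ENNReal.ofReal (Real.negMulLog a + a * Real.log C + a) := by
  set s₀ := Real.log (C / a) with hs₀def
  have hC0 : (0:ℝ) < C := lt_of_lt_of_le one_pos hC
  have hs₀ : 0 ≤ s₀ := Real.log_nonneg ((one_le_div ha).2 (ha1.trans hC))
  have hsplit : Ioi (0:ℝ) = Ioc 0 s₀ ∪ Ioi s₀ := (Ioc_union_Ioi_eq_Ioi hs₀).symm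
  rw [hsplit, lintegral_union measurableSet_Ioi Ioc_disjoint_Ioi_same]
  have h1 : (∫⁻ t in Ioc (0:ℝ) s₀, min (ENNReal.ofReal a) (ENNReal.ofReal (C * Real.exp (-t))))
      ≤ ENNReal.ofReal a * ENNReal.ofReal s₀ := by
    calc (∫⁻ t in Ioc (0:ℝ) s₀, min (ENNReal.ofReal a) (ENNReal.ofReal (C * Real.exp (-t))))
        ≤ ∫⁻ _t in Ioc (0:ℝ) s₀, ENNReal.ofReal a := lintegral_mono fun t => min_le_left _ _
      _ = ENNReal.ofReal a * volume (Ioc (0:ℝ) s₀) := setLIntegral_const _ _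
      _ = ENNReal.ofReal a * ENNReal.ofReal s₀ := by rw [Real.volume_Ioc, sub_zero]
  have hInt : IntegrableOn (fun t : ℝ => C * Real.exp (-t)) (Ioi s₀) := by
    have := (exp_neg_integrableOn_Ioi s₀ one_pos).const_mul C
    simpa [IntegrableOn] using this
  have h2 : (∫⁻ t in Ioi s₀, min (ENNReal.ofReal a) (ENNReal.ofReal (C * Real.exp (-t))))
      ≤ ENNReal.ofReal a := by
    calc (∫⁻ t in Ioi s₀, min (ENNReal.ofReal a) (ENNReal.ofReal (C * Real.exp (-t))))
        ≤ ∫⁻ t in Ioi s₀, ENNReal.ofReal (C * Real.exp (-t)) :=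
          lintegral_mono fun t => min_le_right _ _
      _ = ENNReal.ofReal (∫ t in Ioi s₀, C * Real.exp (-t)) :=
          (ofReal_integral_eq_lintegral_ofReal hInt
            (Eventually.of_forall fun t => by positivity)).symm
      _ = ENNReal.ofReal (C * Real.exp (-s₀)) := by
          rw [MeasureTheory.integral_const_mul, integral_exp_neg_Ioi]
      _ = ENNReal.ofReal a := by
          congr 1
          rw [Real.exp_neg, Real.exp_log (div_pos hC0 ha)]
          field_simp
  refine (add_le_add h1 h2).trans (le_of_eq ?_)
  calc ENNReal.ofReal a * ENNReal.ofReal s₀ + ENNReal.ofReal a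
      = ENNReal.ofReal (a * s₀ + a) := by
        rw [← ENNReal.ofReal_mul ha.le, ← ENNReal.ofReal_add (by positivity) ha.le]
    _ = ENNReal.ofReal (Real.negMulLog a + a * Real.log C + a) := by
        congr 1
        rw [hs₀def, Real.log_div hC0.ne' ha.ne', Real.negMulLog_def]
        ring

section Part
variable {I : Type} [MeasurableSpace I] [MeasurableSingletonClass I] [Countable I] {m : ℕ}

lemma measurableSet_cylW (w : Fin m → I) : MeasurableSet (cylW w) := by
  have : cylW w = ⋂ k : Fin m, (fun j : ℕ → I => j (k : ℕ)) ⁻¹' {w k} := by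
    ext j; simp [cylW]
  rw [this]
  exact MeasurableSet.iInter fun k =>
    (measurable_pi_apply (k : ℕ)) (measurableSet_singleton (w k))

lemma cylW_disjoint : Pairwise (Function.onFun Disjoint fun w : Fin m → I => cylW w) := by
  intro w w' hww
  rw [Function.onFun, Set.disjoint_left]
  intro j hj hj'
  exact hww (funext fun k => (hj k).symm.trans (hj' k))

lemma iUnion_cylW : (⋃ w : Fin m → I, cylW w) = Set.univ := by
  ext j
  simp only [Set.mem_iUnion, Set.mem_univ, iff_true]
  exact ⟨fun k => j k, fun k => rfl⟩

lemma cyl_eq_cylW {w : Fin m → I} {i : ℕ → I} (hi : i ∈ cylW w) : cyl i m = cylW w := by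
  ext j
  constructor
  · intro hj k; exact (hj k k.2).trans (hi k)
  · intro hj k hk; exact (hj ⟨k, hk⟩).trans (hi ⟨k, hk⟩).symm

lemma sum_restrict_cylW (μ : Measure (ℕ → I)) :
    μ = Measure.sum (fun w : Fin m → I => μ.restrict (cylW w)) := by
  ext s hs
  rw [Measure.sum_apply _ hs]
  simp_rw [Measure.restrict_apply hs]
  have h1 : μ s = μ (⋃ w : Fin m → I, s ∩ cylW w) := by
    rw [← Set.inter_iUnion, iUnion_cylW, Set.inter_univ]
  rw [h1]
  exact measure_iUnion (fun w w' hww => ((cylW_disjoint hww).mono inf_le_right inf_le_right))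
    (fun w => hs.inter (measurableSet_cylW w))

lemma tsum_cylW (μ : Measure (ℕ → I)) [IsProbabilityMeasure μ] :
    (∑' w : Fin m → I, μ (cylW w)) = 1 := by
  rw [← measure_iUnion cylW_disjoint (fun w => measurableSet_cylW w), iUnion_cylW,
    measure_univ]

end Part

end AuxLemmas

/-- with `C` the Besicovitch covering constant of `ℝ^d`, for any Borel probability
measure `μ` on `I^ℕ`, continuous `θ : I^ℕ → ℝ^d` and cylinder partition `P_m` with finite
entropy, the function `G(i) = -inf_{r>0} log ( μ(B^θ(i,r) ∩ [i|_m]) / μ(B^θ(i,r)) )`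
satisfies `∫ G dμ ≤ H_μ(P_m) + log C + 1 < ∞`. -/
theorem info_function_integrable (d : ℕ) :
    ∃ C : ℝ, 0 < C ∧
      ∀ (I : Type) [MeasurableSpace I] [MeasurableSingletonClass I] [Countable I]
        [TopologicalSpace I] [DiscreteTopology I]
        (μ : Measure (ℕ → I)), IsProbabilityMeasure μ →
        ∀ (θ : (ℕ → I) → EuclideanSpace ℝ (Fin d)), Continuous θ →
        ∀ m : ℕ,
          (Summable fun w : Fin m → I => Real.negMulLog ((μ (cylW w)).toReal)) →
          (∫⁻ i, ENNReal.ofReal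
              (-(⨅ r : {r : ℝ // 0 < r},
                  Real.log ((μ (θ ⁻¹' Metric.closedBall (θ i) r ∩ cyl i m)).toReal /
                    (μ (θ ⁻¹' Metric.closedBall (θ i) r)).toReal))) ∂μ)
            ≤ ENNReal.ofReal
                ((∑' w : Fin m → I, Real.negMulLog ((μ (cylW w)).toReal)) +
                  Real.log C + 1) := by

  classical
  obtain ⟨N, τ, hτ, hN⟩ :=
    HasBesicovitchCovering.no_satelliteConfig (α := EuclideanSpace ℝ (Fin d))
  refine ⟨max (N : ℝ) 1, lt_of_lt_of_le one_pos (le_max_right _ _), ?_⟩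
  intro I _ _ _ _ _ μ hμ θ hθ m hsum
  set C : ℝ := max (N : ℝ) 1 with hCdef
  have hC1 : 1 ≤ C := le_max_right _ _
  have hC0 : (0:ℝ) < C := lt_of_lt_of_le one_pos hC1
  have hNC : (N : ℝ) ≤ C := le_max_left _ _
  have hθm : Measurable θ := hθ.measurable
  set ν : Measure (EuclideanSpace ℝ (Fin d)) := Measure.map θ μ with hν
  haveI : IsProbabilityMeasure ν := Measure.isProbabilityMeasure_map hθm.aemeasurable
  set κ : (Fin m → I) → Measure (EuclideanSpace ℝ (Fin d)) :=
    fun w => Measure.map θ (μ.restrict (cylW w)) with hκ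
  haveI hκfin : ∀ w, IsFiniteMeasure (κ w) :=
    fun w => Measure.isFiniteMeasure_map _ _
  have hκν : ∀ w, κ w ≤ ν := fun w => Measure.map_mono Measure.restrict_le_self hθm
  have ha1 : ∀ w : Fin m → I, (μ (cylW w)).toReal ≤ 1 := by
    intro w
    have h := prob_le_one (μ := μ) (s := cylW w)
    have := ENNReal.toReal_mono ENNReal.one_ne_top h
    simpa using this
  -- decomposition of the integral over cylinders
  have hdecomp : ∀ f : (ℕ → I) → ℝ≥0∞,
      (∫⁻ i, f i ∂μ) = ∑' w : Fin m → I, ∫⁻ i, f i ∂(μ.restrict (cylW w)) := by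
    intro f
    conv_lhs => rw [sum_restrict_cylW (m := m) μ]
    exact lintegral_sum_measure f _
  -- per cylinder bound
  have per_w : ∀ w : Fin m → I,
      (∫⁻ i, ENNReal.ofReal
          (-(⨅ r : {r : ℝ // 0 < r},
              Real.log ((μ (θ ⁻¹' Metric.closedBall (θ i) r ∩ cyl i m)).toReal /
                (μ (θ ⁻¹' Metric.closedBall (θ i) r)).toReal))) ∂(μ.restrict (cylW w)))
        ≤ ENNReal.ofReal (Real.negMulLog ((μ (cylW w)).toReal) +
            (μ (cylW w)).toReal * Real.log C + (μ (cylW w)).toReal) := by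
    intro w
    by_cases hw0 : μ (cylW w) = 0
    · have hres : μ.restrict (cylW w) = 0 := Measure.restrict_eq_zero.2 hw0
      rw [hres, lintegral_zero_measure]
      exact zero_le
    set a : ℝ := (μ (cylW w)).toReal with hadef
    have ha : 0 < a := ENNReal.toReal_pos hw0 (measure_ne_top _ _)
    set Fw : (ℕ → I) → ℝ≥0∞ := fun i => Fk (κ w) ν (θ i) with hFw
    set res : Measure (ℕ → I) := μ.restrict (cylW w) with hres
    have hFwm : Measurable Fw := (measurable_Fk _ _).comp hθm
    have hKEY : ∀ s : ℝ, 0 < s → res {i | ENNReal.ofReal s < Fw i}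
        ≤ (N : ℝ≥0∞) * ENNReal.ofReal (Real.exp (-s)) := by
      intro s hs
      have h1 : {i | ENNReal.ofReal s < Fw i}
          = θ ⁻¹' {x | ENNReal.ofReal s < Fk (κ w) ν x} := rfl
      calc res {i | ENNReal.ofReal s < Fw i}
          ≤ (Measure.map θ res) {x | ENNReal.ofReal s < Fk (κ w) ν x} := by
            rw [h1]; exact Measure.le_map_apply hθm.aemeasurable _
        _ = κ w {x | ENNReal.ofReal s < Fk (κ w) ν x} := rfl
        _ ≤ (N : ℝ≥0∞) * ENNReal.ofReal (Real.exp (-s)) := Fk_tail_bound hτ hN ν (κ w) hs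
    have hstep1 : (∫⁻ i, ENNReal.ofReal
          (-(⨅ r : {r : ℝ // 0 < r},
              Real.log ((μ (θ ⁻¹' Metric.closedBall (θ i) r ∩ cyl i m)).toReal /
                (μ (θ ⁻¹' Metric.closedBall (θ i) r)).toReal))) ∂res)
        ≤ ∫⁻ i, Fw i ∂res := by
      apply lintegral_mono_ae
      rw [hres, ae_restrict_iff' (measurableSet_cylW w)]
      apply ae_of_all
      intro i hi
      have hbody : (fun r : {r : ℝ // 0 < r} =>
            Real.log ((μ (θ ⁻¹' Metric.closedBall (θ i) r ∩ cyl i m)).toReal /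
              (μ (θ ⁻¹' Metric.closedBall (θ i) r)).toReal))
          = fun r : {r : ℝ // 0 < r} =>
            Real.log (((κ w) (Metric.closedBall (θ i) r)).toReal /
              (ν (Metric.closedBall (θ i) r)).toReal) := by
        funext r
        have e1 : μ (θ ⁻¹' Metric.closedBall (θ i) r ∩ cyl i m)
            = (κ w) (Metric.closedBall (θ i) r) := by
          rw [cyl_eq_cylW hi, hκ]
          rw [Measure.map_apply hθm measurableSet_closedBall,
            Measure.restrict_apply (hθm measurableSet_closedBall)]
        have e2 : μ (θ ⁻¹' Metric.closedBall (θ i) r)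
            = ν (Metric.closedBall (θ i) r) := by
          rw [hν, Measure.map_apply hθm measurableSet_closedBall]
        rw [e1, e2]
      rw [hbody]
      exact ofReal_le_Fk (κ w) ν (hκν w) (θ i)
    have hinf : res {i | Fw i = ∞} = 0 := by
      have hb : ∀ n : ℕ, res {i | Fw i = ∞}
          ≤ (N : ℝ≥0∞) * ENNReal.ofReal (Real.exp (-((n:ℝ)+1))) := by
        intro n
        refine le_trans (measure_mono ?_) (hKEY ((n:ℝ)+1) (by positivity))
        intro i hi
        have hi' : Fw i = ∞ := hi
        show ENNReal.ofReal ((n:ℝ)+1) < Fw i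
        rw [hi']
        exact ENNReal.ofReal_lt_top
      have htend : Tendsto (fun n : ℕ => (N : ℝ≥0∞) * ENNReal.ofReal (Real.exp (-((n:ℝ)+1))))
          atTop (𝓝 0) := by
        have h0 : Tendsto (fun n : ℕ => ((n:ℝ)+1)) atTop atTop :=
          tendsto_atTop_add_const_right _ 1 tendsto_natCast_atTop_atTop
        have h1 : Tendsto (fun n : ℕ => Real.exp (-((n:ℝ)+1))) atTop (𝓝 0) :=
          Real.tendsto_exp_atBot.comp (tendsto_neg_atBot_iff.2 h0)
        have h2 : Tendsto (fun n : ℕ => ENNReal.ofReal (Real.exp (-((n:ℝ)+1)))) atTop (𝓝 0) := by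
          have := ENNReal.tendsto_ofReal h1
          simpa using this
        have h3 := ENNReal.Tendsto.const_mul h2 (Or.inr (ENNReal.natCast_ne_top N))
        simpa using h3
      exact le_antisymm (ge_of_tendsto' htend hb) (zero_le)
    have haefin : ∀ᵐ i ∂res, Fw i ≠ ∞ := by
      rw [ae_iff]
      simpa [not_not] using hinf
    have hcong : (∫⁻ i, Fw i ∂res) = ∫⁻ i, ENNReal.ofReal ((Fw i).toReal) ∂res := by
      apply lintegral_congr_ae
      filter_upwards [haefin] with i hi
      rw [ENNReal.ofReal_toReal hi]
    have hlayer : (∫⁻ i, ENNReal.ofReal ((Fw i).toReal) ∂res)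
        = ∫⁻ t in Ioi (0:ℝ), res {i | t < (Fw i).toReal} :=
      lintegral_eq_lintegral_meas_lt res (ae_of_all _ fun i => ENNReal.toReal_nonneg)
        hFwm.ennreal_toReal.aemeasurable
    have hbound : ∀ t ∈ Ioi (0:ℝ), res {i | t < (Fw i).toReal}
        ≤ min (ENNReal.ofReal a) (ENNReal.ofReal (C * Real.exp (-t))) := by
      intro t ht
      have ht' : (0:ℝ) < t := ht
      apply le_min
      · calc res {i | t < (Fw i).toReal} ≤ res Set.univ := measure_mono (subset_univ _)
          _ = μ (cylW w) := by rw [hres, Measure.restrict_apply_univ]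
          _ = ENNReal.ofReal a := (ENNReal.ofReal_toReal (measure_ne_top _ _)).symm
      · have hsub : {i | t < (Fw i).toReal} ⊆ {i | ENNReal.ofReal t < Fw i} := by
          intro i hi
          have hi' : t < (Fw i).toReal := hi
          show ENNReal.ofReal t < Fw i
          calc ENNReal.ofReal t < ENNReal.ofReal ((Fw i).toReal) :=
                (ENNReal.ofReal_lt_ofReal_iff (lt_trans ht' hi')).2 hi'
            _ ≤ Fw i := ENNReal.ofReal_toReal_le
        refine le_trans (measure_mono hsub) (le_trans (hKEY t ht') ?_)
        calc (N : ℝ≥0∞) * ENNReal.ofReal (Real.exp (-t))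
            = ENNReal.ofReal (N : ℝ) * ENNReal.ofReal (Real.exp (-t)) := by
              rw [ENNReal.ofReal_natCast]
          _ ≤ ENNReal.ofReal C * ENNReal.ofReal (Real.exp (-t)) := by gcongr
          _ = ENNReal.ofReal (C * Real.exp (-t)) := (ENNReal.ofReal_mul hC0.le).symm
    have hminmeas : Measurable fun t : ℝ =>
        min (ENNReal.ofReal a) (ENNReal.ofReal (C * Real.exp (-t))) := by
      apply measurable_const.min
      exact ENNReal.measurable_ofReal.comp
        (continuous_const.mul (Real.continuous_exp.comp continuous_neg)).measurable
    calc (∫⁻ i, ENNReal.ofReal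
          (-(⨅ r : {r : ℝ // 0 < r},
              Real.log ((μ (θ ⁻¹' Metric.closedBall (θ i) r ∩ cyl i m)).toReal /
                (μ (θ ⁻¹' Metric.closedBall (θ i) r)).toReal))) ∂res)
        ≤ ∫⁻ i, Fw i ∂res := hstep1
      _ = ∫⁻ t in Ioi (0:ℝ), res {i | t < (Fw i).toReal} := by rw [hcong, hlayer]
      _ ≤ ∫⁻ t in Ioi (0:ℝ), min (ENNReal.ofReal a) (ENNReal.ofReal (C * Real.exp (-t))) :=
          setLIntegral_mono hminmeas hbound
      _ ≤ ENNReal.ofReal (Real.negMulLog a + a * Real.log C + a) :=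
          integral_min_bound C a hC1 ha (ha1 w)
  -- summation over cylinders
  have hsa : Summable fun w : Fin m → I => (μ (cylW w)).toReal :=
    ENNReal.summable_toReal (by rw [tsum_cylW μ]; exact ENNReal.one_ne_top)
  have hsa1 : (∑' w : Fin m → I, (μ (cylW w)).toReal) = 1 := by
    calc (∑' w : Fin m → I, (μ (cylW w)).toReal)
        = (∑' w : Fin m → I, μ (cylW w)).toReal :=
          (ENNReal.tsum_toReal_eq fun w => measure_ne_top _ _).symm
      _ = 1 := by rw [tsum_cylW μ, ENNReal.toReal_one]
  have hterm_nonneg : ∀ w : Fin m → I,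
      0 ≤ Real.negMulLog ((μ (cylW w)).toReal) +
        (μ (cylW w)).toReal * Real.log C + (μ (cylW w)).toReal := by
    intro w
    have h1 := Real.negMulLog_nonneg (ENNReal.toReal_nonneg (a := μ (cylW w))) (ha1 w)
    have h2 : 0 ≤ (μ (cylW w)).toReal * Real.log C :=
      mul_nonneg ENNReal.toReal_nonneg (Real.log_nonneg hC1)
    have h3 : (0:ℝ) ≤ (μ (cylW w)).toReal := ENNReal.toReal_nonneg
    linarith
  have hterm_summable : Summable fun w : Fin m → I =>
      Real.negMulLog ((μ (cylW w)).toReal) +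
        (μ (cylW w)).toReal * Real.log C + (μ (cylW w)).toReal :=
    (hsum.add (hsa.mul_right _)).add hsa
  have htsum : (∑' w : Fin m → I,
      (Real.negMulLog ((μ (cylW w)).toReal) +
        (μ (cylW w)).toReal * Real.log C + (μ (cylW w)).toReal))
      = (∑' w : Fin m → I, Real.negMulLog ((μ (cylW w)).toReal)) + Real.log C + 1 := by
    rw [Summable.tsum_add (hsum.add (hsa.mul_right _)) hsa, Summable.tsum_add hsum (hsa.mul_right _),
      tsum_mul_right, hsa1]
    ring
  calc (∫⁻ i, ENNReal.ofReal
        (-(⨅ r : {r : ℝ // 0 < r},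
            Real.log ((μ (θ ⁻¹' Metric.closedBall (θ i) r ∩ cyl i m)).toReal /
              (μ (θ ⁻¹' Metric.closedBall (θ i) r)).toReal))) ∂μ)
      = ∑' w : Fin m → I, ∫⁻ i, ENNReal.ofReal
          (-(⨅ r : {r : ℝ // 0 < r},
              Real.log ((μ (θ ⁻¹' Metric.closedBall (θ i) r ∩ cyl i m)).toReal /
                (μ (θ ⁻¹' Metric.closedBall (θ i) r)).toReal))) ∂(μ.restrict (cylW w)) :=
        hdecomp _
    _ ≤ ∑' w : Fin m → I, ENNReal.ofReal (Real.negMulLog ((μ (cylW w)).toReal) +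
          (μ (cylW w)).toReal * Real.log C + (μ (cylW w)).toReal) :=
        ENNReal.tsum_le_tsum per_w
    _ = ENNReal.ofReal (∑' w : Fin m → I,
          (Real.negMulLog ((μ (cylW w)).toReal) +
            (μ (cylW w)).toReal * Real.log C + (μ (cylW w)).toReal)) :=
        (ENNReal.ofReal_tsum_of_nonneg hterm_nonneg hterm_summable).symm
    _ = ENNReal.ofReal
          ((∑' w : Fin m → I, Real.negMulLog ((μ (cylW w)).toReal)) + Real.log C + 1) := by
        rw [htsum]
end
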